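/- arXiv:0808.4135 — 11 statements merged into one kernel-verified Lean document; each statement's English description precedes it below -/
import Mathlib

section
/- Let p be a probability distribution over a finite alphabet X (with |X| ≥ 1) and let p_u be the uniform distribution over X. Then the Shannon entropy satisfies H(p) ≥ log|X| · (1 − |X| · ‖p − p_u‖_∞), where ‖·‖_∞ is the maximum absolute difference of coordinates and log is base 2. -/
open Real

lemma key_log {N t : ℝ} (hN : 2 ≤ N) (ht0 : 0 ≤ t) (ht1 : t ≤ 1) :
    Real.log N * (1/N - |t - 1/N|) ≤ Real.negMulLog t := by
  have hN0 : (0:ℝ) < N := by linarith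
  have hlogN : Real.log 2 ≤ Real.log N := Real.log_le_log (by norm_num) hN
  have hlog2 : 0 < Real.log 2 := Real.log_pos (by norm_num)
  rcases le_or_gt t (1/N) with h | h
  · rw [abs_of_nonpos (by linarith)]
    have heq : Real.log N * (1/N - -(t - 1/N)) = t * Real.log N := by ring
    rw [heq]
    rcases eq_or_lt_of_le ht0 with rfl | ht0'
    · simp [Real.negMulLog]
    · rw [Real.negMulLog]
      have hNt : N * t ≤ 1 := by
        rw [le_div_iff₀ hN0] at h
        nlinarith
      have : Real.log (N * t) ≤ 0 := Real.log_nonpos (by positivity) hNt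
      rw [Real.log_mul (by linarith) (ne_of_gt ht0')] at this
      nlinarith
  · rw [abs_of_pos (by linarith)]
    rcases le_or_gt (2/N) t with h2 | h2
    · have : Real.log N * (1/N - (t - 1/N)) ≤ 0 := by
        apply mul_nonpos_of_nonneg_of_nonpos (by linarith)
        have : 2/N ≤ t := h2
        have h2N : (2:ℝ)/N = 1/N + 1/N := by ring
        linarith [h2N ▸ this]
      exact this.trans (Real.negMulLog_nonneg ht0 ht1)
    · set a : ℝ := 2 - N * t with ha_def
      set b : ℝ := N * t - 1 with hb_def
      have ha : 0 ≤ a := by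
        have : t < 2/N := h2
        rw [lt_div_iff₀ hN0] at this
        simp [ha_def]; nlinarith
      have hb : 0 ≤ b := by
        rw [div_lt_iff₀ hN0] at h
        simp [hb_def]; nlinarith
      have hab : a + b = 1 := by ring
      have hcon := Real.concaveOn_negMulLog.2 (x := 1/N) (y := 2/N)
        (by simp [Set.mem_Ici]; positivity) (by simp [Set.mem_Ici]; positivity) ha hb hab
      have hxy : a • (1/N) + b • (2/N) = t := by
        field_simp
        rw [ha_def, hb_def]
        linear_combination t * (inv_mul_cancel₀ hN0.ne')
      rw [hxy] at hcon
      have h1 : Real.negMulLog (1/N) = (1/N) * Real.log N := by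
        rw [Real.negMulLog, one_div, Real.log_inv]; ring
      have h2' : Real.negMulLog (2/N) = (2/N) * (Real.log N - Real.log 2) := by
        rw [Real.negMulLog, Real.log_div (by norm_num) (ne_of_gt hN0)]; ring
      simp only [smul_eq_mul] at hcon
      have hd : 1/N - (t - 1/N) = a/N := by field_simp; ring
      rw [hd]
      have hpos : 0 ≤ b * ((2/N) * (Real.log N - Real.log 2)) :=
        mul_nonneg hb (mul_nonneg (by positivity) (by linarith))
      rw [h1, h2'] at hcon
      have heq2 : Real.log N * (a/N) = a * (1/N * Real.log N) := by ring
      linarith [hcon, hpos, heq2]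

lemma key_logb {n : ℕ} (hn : 1 ≤ n) {t : ℝ} (ht0 : 0 ≤ t) (ht1 : t ≤ 1) :
    Real.logb 2 n * (1/(n:ℝ) - |t - 1/(n:ℝ)|) ≤ -(t * Real.logb 2 t) := by
  have hlog2 : 0 < Real.log 2 := Real.log_pos (by norm_num)
  have hR : -(t * Real.logb 2 t) = Real.negMulLog t / Real.log 2 := by
    rw [Real.logb, Real.negMulLog]; ring
  have hL : Real.logb 2 (n:ℝ) * (1/(n:ℝ) - |t - 1/(n:ℝ)|) =
      Real.log (n:ℝ) * (1/(n:ℝ) - |t - 1/(n:ℝ)|) / Real.log 2 := by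
    rw [Real.logb]; ring
  rw [hR, hL]
  gcongr
  rcases eq_or_lt_of_le hn with h1 | h2
  · rw [← h1]
    simp [Real.negMulLog_nonneg ht0 ht1]
  · exact key_log (by exact_mod_cast h2) ht0 ht1

/-- **Entropy L∞ bound.** For a probability distribution `p` over a finite alphabet `X`,
`H(p) ≥ log₂|X| · (1 − |X| · ‖p − p_u‖_∞)` where `p_u` is uniform. -/
theorem entropy_Linf_bound {X : Type*} [Fintype X] [Nonempty X]
    (p : X → ℝ) (hp : ∀ x, 0 ≤ p x) (hsum : ∑ x, p x = 1) :
    (-∑ x, p x * Real.logb 2 (p x)) ≥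
      Real.logb 2 (Fintype.card X) *
        (1 - (Fintype.card X : ℝ) *
          (Finset.univ.sup' Finset.univ_nonempty
            fun x => |p x - 1 / (Fintype.card X : ℝ)|)) := by
  classical
  set n := Fintype.card X with hn
  have hn1 : 1 ≤ n := Fintype.card_pos
  have hnR : (0:ℝ) < n := by exact_mod_cast hn1
  set ε := Finset.univ.sup' Finset.univ_nonempty fun x => |p x - 1/(n:ℝ)| with hε
  have hεx : ∀ x : X, |p x - 1/(n:ℝ)| ≤ ε := fun x => Finset.le_sup' (fun x => |p x - 1/(n:ℝ)|) (Finset.mem_univ x)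
  have hp1 : ∀ x, p x ≤ 1 := by
    intro x
    calc p x ≤ ∑ y, p y := Finset.single_le_sum (fun y _ => hp y) (Finset.mem_univ x)
    _ = 1 := hsum
  have hlogbn : 0 ≤ Real.logb 2 (n:ℝ) :=
    Real.logb_nonneg (by norm_num) (by exact_mod_cast hn1)
  have key : ∀ x : X, Real.logb 2 (n:ℝ) * (1/(n:ℝ) - ε) ≤ -(p x * Real.logb 2 (p x)) := by
    intro x
    refine le_trans ?_ (key_logb hn1 (hp x) (hp1 x))
    apply mul_le_mul_of_nonneg_left _ hlogbn
    linarith [hεx x]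
  have hsum2 : ∑ _x : X, (Real.logb 2 (n:ℝ) * (1/(n:ℝ) - ε)) ≤
      ∑ x, -(p x * Real.logb 2 (p x)) :=
    Finset.sum_le_sum fun x _ => key x
  rw [Finset.sum_const, Finset.card_univ, ← hn, Finset.sum_neg_distrib, nsmul_eq_mul] at hsum2
  rw [ge_iff_le]
  have heq : Real.logb 2 (n:ℝ) * (1 - (n:ℝ) * ε) =
      (n:ℝ) * (Real.logb 2 (n:ℝ) * (1/(n:ℝ) - ε)) := by
    field_simp
  rw [heq]
  exact hsum2
end

section
/- For any individual sequence zomb ∈ X^n over a finite alphabet X, the Krichevsky–Trofimov sequential probability estimator satisfies −(1/n) log p̂^{KT}(z^n) ≤ H_emp(z^n) + ((|X|−1) log n + C)/(2n) for some constant C depending only on |X|, where H_emp(z^n) is the entropy of the empirical distribution of z^n. -/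
open Finset

/-- The probability assigned by the Krichevsky–Trofimov sequential estimator to
an individual sequence `z ∈ Xⁿ`:
`p̂ᴷᵀ(zⁿ) = ∏ₖ (n_{z_k}(z^{k−1}) + 1/2)/(k − 1 + |X|/2)` (0-indexed positions). -/
noncomputable def ktProb {X : Type*} [Fintype X] [DecidableEq X] {n : ℕ}
    (z : Fin n → X) : ℝ :=
  ∏ k : Fin n,
    (((Finset.univ.filter (fun j : Fin n => j < k ∧ z j = z k)).card : ℝ) + 1/2) /
      ((k : ℝ) + (Fintype.card X : ℝ) / 2)

section KTaux
open Real

lemma sqrt_pi_le_stirlingSeq {N : ℕ} (hN : 1 ≤ N) : Real.sqrt π ≤ Stirling.stirlingSeq N := by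
  obtain ⟨k, rfl⟩ := Nat.exists_eq_add_of_le hN
  have := Stirling.stirlingSeq'_antitone.le_of_tendsto
    (Stirling.tendsto_stirlingSeq_sqrt_pi.comp (Filter.tendsto_add_atTop_nat 1)) k
  simpa [Function.comp, Nat.add_comm] using this

lemma stirlingSeq_le {N : ℕ} (hN : 1 ≤ N) : Stirling.stirlingSeq N ≤ Real.exp 1 / Real.sqrt 2 := by
  obtain ⟨k, rfl⟩ := Nat.exists_eq_add_of_le hN
  have := Stirling.stirlingSeq'_antitone (Nat.zero_le k)
  simpa [Function.comp, Nat.add_comm, Stirling.stirlingSeq_one] using this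

lemma stirlingSeq_pos {N : ℕ} (hN : 1 ≤ N) : 0 < Stirling.stirlingSeq N :=
  lt_of_lt_of_le (Real.sqrt_pos.mpr Real.pi_pos) (sqrt_pi_le_stirlingSeq hN)

lemma log_factorial_eq {N : ℕ} (hN : 1 ≤ N) :
    Real.log ((Nat.factorial N : ℕ) : ℝ) = Real.log (Stirling.stirlingSeq N)
      + (1/2) * Real.log (2*N) + N * Real.log N - N := by
  have hNpos : (0:ℝ) < N := by exact_mod_cast hN
  have hs := stirlingSeq_pos hN
  have h1 : ((Nat.factorial N : ℕ) : ℝ)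
      = Stirling.stirlingSeq N * (Real.sqrt (2*N) * ((N:ℝ)/Real.exp 1)^N) := by
    rw [Stirling.stirlingSeq]
    field_simp
  rw [h1, Real.log_mul (ne_of_gt hs) (by positivity), Real.log_mul (by positivity) (by positivity),
    Real.log_sqrt (by positivity), Real.log_pow,
    Real.log_div (ne_of_gt hNpos) (Real.exp_ne_zero 1), Real.log_exp]
  ring

lemma log_factorial_ge {N : ℕ} (hN : 1 ≤ N) :
    N * Real.log N - N + (1/2) * Real.log (2*N) + (1/2) * Real.log π
      ≤ Real.log ((Nat.factorial N : ℕ) : ℝ) := by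
  rw [log_factorial_eq hN]
  have h1 : (1/2) * Real.log π ≤ Real.log (Stirling.stirlingSeq N) := by
    have := Real.log_le_log (Real.sqrt_pos.mpr Real.pi_pos) (sqrt_pi_le_stirlingSeq hN)
    rwa [Real.log_sqrt (le_of_lt Real.pi_pos), div_eq_inv_mul, ← one_div] at this
  linarith

lemma log_factorial_le {N : ℕ} (hN : 1 ≤ N) :
    Real.log ((Nat.factorial N : ℕ) : ℝ) ≤ N * Real.log N - N + (1/2) * Real.log (2*N) + (1 - (1/2) * Real.log 2) := by
  rw [log_factorial_eq hN]
  have h1 : Real.log (Stirling.stirlingSeq N) ≤ 1 - (1/2) * Real.log 2 := by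
    calc Real.log (Stirling.stirlingSeq N) ≤ Real.log (Real.exp 1 / Real.sqrt 2) :=
          Real.log_le_log (stirlingSeq_pos hN) (stirlingSeq_le hN)
      _ = 1 - (1/2) * Real.log 2 := by
          rw [Real.log_div (Real.exp_ne_zero 1) (by positivity), Real.log_exp,
            Real.log_sqrt (by norm_num)]
          ring
  linarith

noncomputable def Aprod (N : ℕ) : ℝ := ∏ j ∈ Finset.range N, ((j:ℝ) + 1/2)

lemma Aprod_pos (N : ℕ) : 0 < Aprod N := Finset.prod_pos fun j _ => by positivity

lemma Aprod_eq (N : ℕ) :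
    Aprod N = ((Nat.factorial (2*N) : ℕ) : ℝ) / (4^N * ((Nat.factorial N : ℕ) : ℝ)) := by
  induction N with
  | zero => simp [Aprod]
  | succ n ih =>
    rw [Aprod, Finset.prod_range_succ, ← Aprod, ih,
      show 2*(n+1) = (2*n+1)+1 by ring, Nat.factorial_succ, Nat.factorial_succ,
      Nat.factorial_succ]
    have h4 : (4:ℝ)^n ≠ 0 := by positivity
    have hf : ((Nat.factorial n : ℕ) : ℝ) ≠ 0 := by
      exact_mod_cast Nat.factorial_ne_zero n
    have hf2 : ((Nat.factorial (2*n) : ℕ) : ℝ) ≠ 0 := by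
      exact_mod_cast Nat.factorial_ne_zero (2*n)
    push_cast
    field_simp
    ring

lemma log_Aprod_ge (N : ℕ) : (N:ℝ) * Real.log N - N ≤ Real.log (Aprod N) := by
  rcases Nat.eq_zero_or_pos N with rfl | hN
  · simp [Aprod]
  have h2N : 1 ≤ 2*N := by omega
  have hg := log_factorial_ge h2N
  have hl := log_factorial_le hN
  have hc1 : ((2*N : ℕ):ℝ) = 2*(N:ℝ) := by push_cast; ring
  have hNpos : (0:ℝ) < N := by exact_mod_cast hN
  have hlog2N : Real.log (2*(N:ℝ)) = Real.log 2 + Real.log N :=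
    Real.log_mul (by norm_num) (ne_of_gt hNpos)
  have hlog4N : Real.log (2*((2*N:ℕ):ℝ)) = 2 * Real.log 2 + Real.log N := by
    rw [hc1, show (2:ℝ)*(2*(N:ℝ)) = 2*2*(N:ℝ) by ring,
      Real.log_mul (by norm_num) (ne_of_gt hNpos), show (2:ℝ)*2 = 2^2 by norm_num,
      Real.log_pow]
    push_cast; ring
  rw [Aprod_eq, Real.log_div (by exact_mod_cast Nat.factorial_ne_zero (2*N)) (by positivity),
    Real.log_mul (by positivity) (by exact_mod_cast Nat.factorial_ne_zero N),
    show (4:ℝ)^N = (2^2)^N by norm_num, ← pow_mul, Real.log_pow]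
  rw [hc1] at hg
  rw [Real.log_mul (by norm_num) (ne_of_gt hNpos)] at hg hl
  have hπ : (1:ℝ) ≤ Real.log π := by
    rw [show (1:ℝ) = Real.log (Real.exp 1) by simp]
    apply Real.log_le_log (Real.exp_pos 1)
    have := Real.exp_one_lt_d9
    nlinarith [Real.pi_gt_three]
  have hln2 : (0.6931471803 : ℝ) < Real.log 2 := Real.log_two_gt_d9
  have := hlog4N
  push_cast at hg hl this ⊢
  rw [this] at hg
  nlinarith [hg, hl]

lemma log_Aprod_le (N : ℕ) : Real.log (Aprod N) ≤ (N:ℝ) * Real.log N - N + 1 := by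
  rcases Nat.eq_zero_or_pos N with rfl | hN
  · simp [Aprod]
  have h2N : 1 ≤ 2*N := by omega
  have hg := log_factorial_ge hN
  have hl := log_factorial_le h2N
  have hc1 : ((2*N : ℕ):ℝ) = 2*(N:ℝ) := by push_cast; ring
  have hNpos : (0:ℝ) < N := by exact_mod_cast hN
  have hlog4N : Real.log (2*((2*N:ℕ):ℝ)) = 2 * Real.log 2 + Real.log N := by
    rw [hc1, show (2:ℝ)*(2*(N:ℝ)) = 2*2*(N:ℝ) by ring,
      Real.log_mul (by norm_num) (ne_of_gt hNpos), show (2:ℝ)*2 = 2^2 by norm_num,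
      Real.log_pow]
    push_cast; ring
  rw [Aprod_eq, Real.log_div (by exact_mod_cast Nat.factorial_ne_zero (2*N)) (by positivity),
    Real.log_mul (by positivity) (by exact_mod_cast Nat.factorial_ne_zero N),
    show (4:ℝ)^N = (2^2)^N by norm_num, ← pow_mul, Real.log_pow]
  rw [hc1] at hl
  rw [Real.log_mul (by norm_num) (ne_of_gt hNpos)] at hg hl
  have hπ : (0:ℝ) ≤ Real.log π := Real.log_nonneg (by nlinarith [Real.pi_gt_three])
  have := hlog4N
  push_cast at hg hl this ⊢
  rw [this] at hl
  nlinarith [hg, hl]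

lemma prod_range_cast_add_one (N : ℕ) :
    ∏ j ∈ Finset.range N, ((j:ℝ)+1) = ((Nat.factorial N : ℕ) : ℝ) := by
  induction N with
  | zero => simp
  | succ n ih => rw [Finset.prod_range_succ, ih, Nat.factorial_succ]; push_cast; ring

lemma log_le_add (n s : ℕ) (hn : 1 ≤ n) :
    Real.log ((n:ℝ) + s) ≤ Real.log n + s / n := by
  have hn' : (0:ℝ) < n := by exact_mod_cast hn
  have h : Real.log (((n:ℝ)+s)/n) ≤ ((n:ℝ)+s)/n - 1 :=
    Real.log_le_sub_one_of_pos (by positivity)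
  rw [Real.log_div (by positivity) (ne_of_gt hn')] at h
  have : ((n:ℝ)+s)/n - 1 = s / n := by field_simp; ring
  linarith [this ▸ h]

set_option maxHeartbeats 1000000 in
lemma denom_bound (m : ℕ) (hm : 1 ≤ m) : ∃ D : ℝ, ∀ n : ℕ, 1 ≤ n →
    Real.log (∏ k ∈ Finset.range n, ((k:ℝ) + (m:ℝ)/2))
      ≤ (n:ℝ) * Real.log n + ((m:ℝ)-1)/2 * Real.log n - n + D := by
  rcases Nat.even_or_odd m with ⟨s, hs⟩ | ⟨s, hs⟩
  · -- m = 2s, s ≥ 1 ; set t = s - 1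
    obtain ⟨t, rfl⟩ : ∃ t, s = t + 1 := ⟨s - 1, by omega⟩
    refine ⟨(1/2) * Real.log (2*((t:ℝ)+1)) + 1 + t + t^2 - Real.log ((Nat.factorial t : ℕ):ℝ),
      fun n hn => ?_⟩
    have hn' : (0:ℝ) < n := by exact_mod_cast hn
    have hn1 : (1:ℝ) ≤ n := by exact_mod_cast hn
    have htpos : (0:ℝ) ≤ t := Nat.cast_nonneg t
    have hkey : (0:ℝ) ≤ (t:ℝ) * ((n:ℝ) - 1) := mul_nonneg htpos (by linarith)
    have hkey2 : (0:ℝ) ≤ (t:ℝ)^2 * ((n:ℝ) - 1) := mul_nonneg (sq_nonneg _) (by linarith)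
    have hprod : ∏ k ∈ Finset.range n, ((k:ℝ) + (m:ℝ)/2)
        = ((Nat.factorial (t+n) : ℕ):ℝ) / ((Nat.factorial t : ℕ):ℝ) := by
      rw [← prod_range_cast_add_one (t+n), ← prod_range_cast_add_one t,
        Finset.prod_range_add]
      rw [mul_comm, mul_div_assoc, div_self (by positivity : (∏ j ∈ Finset.range t, ((j:ℝ)+1)) ≠ 0), mul_one]
      apply Finset.prod_congr rfl
      intro k _
      have : (m:ℝ) = 2*((t:ℝ)+1) := by rw [hs]; push_cast; ring
      rw [this]; push_cast; ring
    rw [hprod, Real.log_div (by exact_mod_cast Nat.factorial_ne_zero (t+n))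
      (by exact_mod_cast Nat.factorial_ne_zero t)]
    have h1 : 1 ≤ t + n := by omega
    have hle := log_factorial_le h1
    have hcast : ((t+n : ℕ):ℝ) = (n:ℝ) + t := by push_cast; ring
    rw [hcast] at hle
    have h2 : Real.log ((n:ℝ) + t) ≤ Real.log n + t / n := log_le_add n t hn
    have h3 : Real.log (2*((n:ℝ)+t)) ≤ Real.log (2*((t:ℝ)+1)) + Real.log n := by
      have e1 : (2:ℝ)*((n:ℝ)+t) = (2*((t:ℝ)+1)) * n * ((n+t)/((t+1)*n)) := by
        field_simp
      have e2 : ((n:ℝ)+t)/(((t:ℝ)+1)*n) ≤ 1 := by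
        rw [div_le_one (by positivity)]
        nlinarith []
      calc Real.log (2*((n:ℝ)+t)) ≤ Real.log ((2*((t:ℝ)+1)) * n) := by
            apply Real.log_le_log (by positivity)
            rw [e1]
            nlinarith [mul_pos (by positivity : (0:ℝ) < 2*((t:ℝ)+1)) hn']
        _ = Real.log (2*((t:ℝ)+1)) + Real.log n :=
            Real.log_mul (by positivity) (ne_of_gt hn')
    have hm1 : ((m:ℝ)-1)/2 = (t:ℝ) + 1/2 := by rw [hs]; push_cast; ring
    rw [hm1]
    have htn : (t:ℝ)/n ≤ t := by
      rw [div_le_iff₀ hn']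
      nlinarith []
    have hmul : ((n:ℝ)+t) * Real.log ((n:ℝ)+t) ≤ ((n:ℝ)+t) * (Real.log n + t/n) := by
      apply mul_le_mul_of_nonneg_left h2 (by positivity)
    have hexp : ((n:ℝ)+t) * (Real.log n + t/n) = n * Real.log n + t * Real.log n + t + t^2/n := by
      field_simp; ring
    have ht2 : (t:ℝ)^2/n ≤ t^2 := by
      rw [div_le_iff₀ hn']
      nlinarith []
    nlinarith [hle, hmul, Real.log_nonneg (by norm_num : (1:ℝ) ≤ 2)]
  · -- m = 2s+1
    refine ⟨1 + s + s^2 - ((s:ℝ) * Real.log s - s), fun n hn => ?_⟩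
    have hn' : (0:ℝ) < n := by exact_mod_cast hn
    have hn1 : (1:ℝ) ≤ n := by exact_mod_cast hn
    have htpos : (0:ℝ) ≤ s := Nat.cast_nonneg s
    have hkey : (0:ℝ) ≤ (s:ℝ) * ((n:ℝ) - 1) := mul_nonneg htpos (by linarith)
    have hkey2 : (0:ℝ) ≤ (s:ℝ)^2 * ((n:ℝ) - 1) := mul_nonneg (sq_nonneg _) (by linarith)
    have hprod : Aprod (s+n) = Aprod s * ∏ k ∈ Finset.range n, ((k:ℝ) + (m:ℝ)/2) := by
      rw [Aprod, Finset.prod_range_add, ← Aprod]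
      congr 1
      apply Finset.prod_congr rfl
      intro k _
      have : (m:ℝ) = 2*(s:ℝ)+1 := by rw [hs]; push_cast; ring
      rw [this]; push_cast; ring
    have hmpos : (0:ℝ) < (m:ℝ) := by exact_mod_cast hm
    have hppos : (0:ℝ) < ∏ k ∈ Finset.range n, ((k:ℝ) + (m:ℝ)/2) :=
      Finset.prod_pos fun k _ => by
        have : (0:ℝ) ≤ (k:ℝ) := Nat.cast_nonneg k
        linarith
    have heq : Real.log (∏ k ∈ Finset.range n, ((k:ℝ) + (m:ℝ)/2))
        = Real.log (Aprod (s+n)) - Real.log (Aprod s) := by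
      rw [hprod, Real.log_mul (ne_of_gt (Aprod_pos s)) (ne_of_gt hppos)]
      ring
    rw [heq]
    have hub := log_Aprod_le (s+n)
    have hlb := log_Aprod_ge s
    have hcast : ((s+n : ℕ):ℝ) = (n:ℝ) + s := by push_cast; ring
    rw [hcast] at hub
    have h2 : Real.log ((n:ℝ) + s) ≤ Real.log n + s / n := log_le_add n s hn
    have hmul : ((n:ℝ)+s) * Real.log ((n:ℝ)+s) ≤ ((n:ℝ)+s) * (Real.log n + s/n) :=
      mul_le_mul_of_nonneg_left h2 (by positivity)
    have hexp : ((n:ℝ)+s) * (Real.log n + s/n)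
        = n * Real.log n + s * Real.log n + s + (s:ℝ)^2/n := by field_simp; ring
    have ht2 : (s:ℝ)^2/n ≤ (s:ℝ)^2 := by rw [div_le_iff₀ hn']; nlinarith []
    have hm1 : ((m:ℝ)-1)/2 = (s:ℝ) := by rw [hs]; push_cast; ring
    rw [hm1]
    nlinarith [hub, hlb, hmul]

set_option maxHeartbeats 2000000 in
lemma fiber_prod {X : Type*} [DecidableEq X] {n : ℕ} (z : Fin n → X) (i : X) :
    ∏ k ∈ Finset.univ.filter (fun k : Fin n => z k = i),
      (((Finset.univ.filter (fun j : Fin n => j < k ∧ z j = i)).card : ℝ) + 1/2)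
    = Aprod ((Finset.univ.filter (fun j : Fin n => z j = i)).card) := by
  set S := Finset.univ.filter (fun j : Fin n => z j = i) with hS
  set φ : Fin n → ℕ := fun k => (Finset.univ.filter (fun j : Fin n => j < k ∧ z j = i)).card
    with hφ
  have hsub : ∀ k ∈ S, (Finset.univ.filter (fun j : Fin n => j < k ∧ z j = i)) ⊆ S.erase k := by
    intro k hk j hj
    simp only [Finset.mem_filter, Finset.mem_univ, true_and] at hj
    refine Finset.mem_erase.mpr ⟨ne_of_lt hj.1, ?_⟩
    simp [hS, hj.2]
  have hlt : ∀ k ∈ S, φ k < S.card := by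
    intro k hk
    calc φ k ≤ (S.erase k).card := Finset.card_le_card (hsub k hk)
      _ < S.card := by
          rw [Finset.card_erase_of_mem hk]
          have : 0 < S.card := Finset.card_pos.mpr ⟨k, hk⟩
          omega
  have hmono : ∀ k ∈ S, ∀ k' ∈ S, k < k' → φ k < φ k' := by
    intro k hk k' hk' hlt'
    apply Finset.card_lt_card
    constructor
    · intro j hj
      simp only [Finset.mem_filter, Finset.mem_univ, true_and] at hj ⊢
      exact ⟨lt_trans hj.1 hlt', hj.2⟩
    · intro hcon
      have hkmem : k ∈ Finset.univ.filter (fun j : Fin n => j < k' ∧ z j = i) := by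
        simp only [Finset.mem_filter, Finset.mem_univ, true_and]
        refine ⟨hlt', ?_⟩
        simpa [hS] using hk
      have := hcon hkmem
      simp only [Finset.mem_filter, Finset.mem_univ, true_and] at this
      exact absurd this.1 (lt_irrefl k)
  have hinj : Set.InjOn φ S := by
    intro k hk k' hk' heq
    by_contra hne
    rcases lt_or_gt_of_ne hne with h | h
    · exact absurd heq (ne_of_lt (hmono k hk k' hk' h))
    · exact absurd heq.symm (ne_of_lt (hmono k' hk' k hk h))
  have himg : S.image φ = Finset.range S.card := by
    apply Finset.eq_of_subset_of_card_le
    · intro t ht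
      obtain ⟨k, hk, rfl⟩ := Finset.mem_image.mp ht
      exact Finset.mem_range.mpr (hlt k hk)
    · rw [Finset.card_image_of_injOn hinj, Finset.card_range]
  calc ∏ k ∈ S, (((φ k : ℕ):ℝ) + 1/2)
      = ∏ t ∈ S.image φ, ((t:ℝ) + 1/2) := (Finset.prod_image (f := fun t : ℕ => ((t:ℝ) + 1/2)) (fun k hk k' hk' => hinj hk hk')).symm
    _ = ∏ t ∈ Finset.range S.card, ((t:ℝ) + 1/2) := by rw [himg]
    _ = Aprod S.card := rfl

lemma ktProb_eq {X : Type*} [Fintype X] [DecidableEq X] {n : ℕ} (z : Fin n → X) :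
    ktProb z = (∏ i : X, Aprod ((Finset.univ.filter (fun j : Fin n => z j = i)).card))
      / ∏ k ∈ Finset.range n, ((k:ℝ) + (Fintype.card X : ℝ)/2) := by
  rw [ktProb, Finset.prod_div_distrib]
  congr 1
  · rw [← Finset.prod_fiberwise Finset.univ z
      (fun k => (((Finset.univ.filter (fun j : Fin n => j < k ∧ z j = z k)).card : ℝ) + 1/2))]
    apply Finset.prod_congr rfl
    intro i _
    rw [← fiber_prod z i]
    apply Finset.prod_congr rfl
    intro k hk
    have : z k = i := by simpa using (Finset.mem_filter.mp hk).2
    simp [this]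
  · exact (Fin.prod_univ_eq_prod_range (fun k => ((k:ℝ) + (Fintype.card X : ℝ)/2)) n)

/-- **KT redundancy.** For every finite alphabet `X` there is a constant `C` (depending
only on `|X|`) such that for every `n ≥ 1` and every individual sequence `zⁿ ∈ Xⁿ`,
`−(1/n) log₂ p̂ᴷᵀ(zⁿ) ≤ H_emp(zⁿ) + ((|X|−1) log₂ n + C)/(2n)`. -/
theorem kt_redundancy {X : Type*} [Fintype X] [DecidableEq X] :
    ∃ C : ℝ, ∀ (n : ℕ), 0 < n → ∀ z : Fin n → X,
      -(1 / (n : ℝ)) * Real.logb 2 (ktProb z) ≤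
        (-∑ i : X,
            (((Finset.univ.filter (fun j : Fin n => z j = i)).card : ℝ) / n) *
              Real.logb 2 (((Finset.univ.filter (fun j : Fin n => z j = i)).card : ℝ) / n))
          + (((Fintype.card X : ℝ) - 1) * Real.logb 2 n + C) / (2 * n) := by
  rcases isEmpty_or_nonempty X with hX | hX
  · exact ⟨0, fun n hn z => ((hX.false (z ⟨0, hn⟩)).elim)⟩
  set m := Fintype.card X with hm'
  have hm : 1 ≤ m := Fintype.card_pos
  obtain ⟨D, hD⟩ := denom_bound m hm
  refine ⟨2*D/Real.log 2, fun n hn z => ?_⟩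
  have hn' : (0:ℝ) < n := by exact_mod_cast hn
  have hlog2 : (0:ℝ) < Real.log 2 := Real.log_pos (by norm_num)
  set c : X → ℕ := fun i => (Finset.univ.filter (fun j : Fin n => z j = i)).card with hc
  have hsum : ∑ i : X, c i = n := by
    have h := Finset.card_eq_sum_card_fiberwise
      (s := (Finset.univ : Finset (Fin n))) (t := (Finset.univ : Finset X)) (f := z)
      (fun k _ => Finset.mem_univ (z k))
    simp only [Finset.card_univ, Fintype.card_fin] at h
    exact h.symm
  have hdenpos : (0:ℝ) < ∏ k ∈ Finset.range n, ((k:ℝ) + (m:ℝ)/2) := by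
    apply Finset.prod_pos
    intro k _
    have h1 : (0:ℝ) ≤ (k:ℝ) := Nat.cast_nonneg k
    have h2 : (0:ℝ) < (m:ℝ) := by exact_mod_cast hm
    linarith
  have hnumpos : (0:ℝ) < ∏ i : X, Aprod (c i) := Finset.prod_pos fun i _ => Aprod_pos _
  have hktpos : 0 < ktProb z := by
    rw [ktProb_eq]
    exact div_pos hnumpos hdenpos
  -- KEY inequality in natural log
  have hlogkt : Real.log (ktProb z)
      = ∑ i : X, Real.log (Aprod (c i)) - Real.log (∏ k ∈ Finset.range n, ((k:ℝ) + (m:ℝ)/2)) := by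
    rw [ktProb_eq, Real.log_div (ne_of_gt hnumpos) (ne_of_gt hdenpos),
      Real.log_prod (fun i _ => ne_of_gt (Aprod_pos _))]
  have hAs : ∑ i : X, ((c i : ℝ) * Real.log (c i) - c i) ≤ ∑ i : X, Real.log (Aprod (c i)) :=
    Finset.sum_le_sum fun i _ => log_Aprod_ge (c i)
  have hsum' : ∑ i : X, ((c i : ℝ) * Real.log (c i) - c i)
      = ∑ i : X, (c i : ℝ) * Real.log (c i) - n := by
    rw [Finset.sum_sub_distrib]
    congr 1
    rw [← Nat.cast_sum, hsum]
  have hKEY : -Real.log (ktProb z)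
      ≤ (n:ℝ) * Real.log n - ∑ i : X, (c i : ℝ) * Real.log (c i)
        + ((m:ℝ)-1)/2 * Real.log n + D := by
    have := hD n hn
    rw [hlogkt]
    rw [hsum'] at hAs
    linarith
  -- rewrite LHS
  have hL : -(1 / (n : ℝ)) * Real.logb 2 (ktProb z)
      = (-Real.log (ktProb z)) / ((n:ℝ) * Real.log 2) := by
    rw [Real.logb]
    field_simp
  -- entropy identity
  have hH : (-∑ i : X, ((c i : ℝ) / n) * Real.logb 2 ((c i : ℝ) / n))
      = ((n:ℝ) * Real.log n - ∑ i : X, (c i : ℝ) * Real.log (c i)) / ((n:ℝ) * Real.log 2) := by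
    have hterm : ∀ i : X, ((c i : ℝ) / n) * Real.logb 2 ((c i : ℝ) / n)
        = ((c i : ℝ) * Real.log (c i) - (c i : ℝ) * Real.log n) / ((n:ℝ) * Real.log 2) := by
      intro i
      rcases Nat.eq_zero_or_pos (c i) with h0 | hpos
      · rw [h0]; simp
      · have hcpos : (0:ℝ) < c i := by exact_mod_cast hpos
        rw [Real.logb, Real.log_div (ne_of_gt hcpos) (ne_of_gt hn')]
        field_simp
    rw [Finset.sum_congr rfl (fun i _ => hterm i), ← Finset.sum_div,
      Finset.sum_sub_distrib, ← Finset.sum_mul, ← Nat.cast_sum, hsum]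
    ring
  -- rewrite the remainder term
  have hR : (((m:ℝ) - 1) * Real.logb 2 n + 2*D/Real.log 2) / (2 * n)
      = (((m:ℝ)-1)/2 * Real.log n + D) / ((n:ℝ) * Real.log 2) := by
    rw [Real.logb]
    field_simp
  rw [hL, hH, hR, ← add_div]
  apply div_le_div_of_nonneg_right ?_ (by positivity)
  linarith

end KTaux
end

section
/- Let p̂^{KT(b)} be a KT(b) estimator over a finite alphabet X, i.e. p̂_k^{KT(b)}(i|z^{k−1}) = p̂_{ν_k+1}^{KT}(i|z^{ν_k}) for a nondecreasing index sequence ν_k with k − b ≤ ν_k ≤ k − 1. Then for any two sequences z^n, w^n ∈ X^n, −log ( p̂^{KT(b)}(z^n ‖ w^n) / p̂^{KT}(z^n) ) ≤ 2|X| (b + d(z^n, w^n) − 1) log(2ne), where d is Hamming distance and p̂(z^n ‖ w^n) = ∏_k p̂_k(z_k | w^{k−1}) is the probability assigned to z^n by the estimator driven by observations w^n. -/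
open Finset

/-- Number of occurrences of the symbol `i` among the first `m` entries of `w`. -/
def occCount {X : Type*} [DecidableEq X] {n : ℕ} (w : Fin n → X) (m : ℕ) (i : X) : ℕ :=
  (Finset.univ.filter (fun j : Fin n => (j : ℕ) < m ∧ w j = i)).card

section Aux

variable {X : Type*} [DecidableEq X] {n : ℕ}

lemma occCount_le_occCount_add (z w : Fin n → X) (i : X) (νk k : ℕ) (hνk : νk ≤ k) :
    occCount z k i ≤ occCount w νk i
      + (Finset.univ.filter (fun j : Fin n => z j ≠ w j)).card + (k - νk) := by
  classical
  have hsub : (Finset.univ.filter (fun j : Fin n => (j : ℕ) < k ∧ z j = i)) ⊆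
      ((Finset.univ.filter (fun j : Fin n => (j : ℕ) < νk ∧ w j = i)) ∪
        (Finset.univ.filter (fun j : Fin n => z j ≠ w j))) ∪
      (Finset.univ.filter (fun j : Fin n => νk ≤ (j : ℕ) ∧ (j : ℕ) < k)) := by
    intro j hj
    simp only [mem_filter, mem_univ, true_and, mem_union] at hj ⊢
    rcases lt_or_ge (j : ℕ) νk with h | h
    · by_cases hw : w j = i
      · exact Or.inl (Or.inl ⟨h, hw⟩)
      · exact Or.inl (Or.inr (by rw [hj.2]; exact fun hc => hw hc.symm))
    · exact Or.inr ⟨h, hj.1⟩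
  have hE : (Finset.univ.filter (fun j : Fin n => νk ≤ (j : ℕ) ∧ (j : ℕ) < k)).card
      ≤ k - νk := by
    have := Finset.card_le_card_of_injOn (fun j : Fin n => (j : ℕ))
      (s := Finset.univ.filter (fun j : Fin n => νk ≤ (j : ℕ) ∧ (j : ℕ) < k))
      (t := Finset.Ico νk k)
      (fun j hj => by
        simp only [Finset.mem_coe, mem_filter, mem_univ, true_and] at hj
        exact Finset.mem_Ico.2 hj)
      (fun a _ b _ h => Fin.ext h)
    simpa [Nat.card_Ico] using this
  calc occCount z k i ≤ _ := Finset.card_le_card hsub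
    _ ≤ (((Finset.univ.filter (fun j : Fin n => (j : ℕ) < νk ∧ w j = i)) ∪
        (Finset.univ.filter (fun j : Fin n => z j ≠ w j))).card) +
        (Finset.univ.filter (fun j : Fin n => νk ≤ (j : ℕ) ∧ (j : ℕ) < k)).card :=
      Finset.card_union_le _ _
    _ ≤ _ := by
      refine add_le_add (le_trans (Finset.card_union_le _ _) ?_) hE
      exact add_le_add_right (le_of_eq rfl) _

lemma occCount_strict (z : Fin n → X) (i : X) {a b : Fin n} (hab : (a : ℕ) < (b : ℕ))
    (ha : z a = i) : occCount z (a : ℕ) i < occCount z (b : ℕ) i := by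
  classical
  have hnot : a ∉ Finset.univ.filter (fun j : Fin n => (j : ℕ) < (a : ℕ) ∧ z j = i) := by
    simp
  have hsub : insert a (Finset.univ.filter (fun j : Fin n => (j : ℕ) < (a : ℕ) ∧ z j = i))
      ⊆ Finset.univ.filter (fun j : Fin n => (j : ℕ) < (b : ℕ) ∧ z j = i) := by
    intro j hj
    rcases Finset.mem_insert.1 hj with rfl | hj
    · simp only [mem_filter, mem_univ, true_and]; exact ⟨hab, ha⟩
    · simp only [mem_filter, mem_univ, true_and] at hj ⊢
      exact ⟨lt_trans hj.1 hab, hj.2⟩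
  have := Finset.card_le_card hsub
  rw [Finset.card_insert_of_notMem hnot] at this
  unfold occCount
  omega

lemma occCount_lt_fiber_card (z : Fin n → X) (i : X) {k : Fin n} (hk : z k = i) :
    occCount z (k : ℕ) i < (Finset.univ.filter (fun j : Fin n => z j = i)).card := by
  classical
  apply Finset.card_lt_card
  constructor
  · intro j hj
    simp only [mem_filter, mem_univ, true_and] at hj ⊢
    exact hj.2
  · intro hcon
    have := hcon (Finset.mem_filter.2 ⟨Finset.mem_univ k, hk⟩)
    simp only [mem_filter, mem_univ, true_and] at this
    exact lt_irrefl _ this.1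

lemma image_occCount_eq_range (z : Fin n → X) (i : X) :
    (Finset.univ.filter (fun k : Fin n => z k = i)).image
        (fun k : Fin n => occCount z (k : ℕ) i)
      = Finset.range (Finset.univ.filter (fun k : Fin n => z k = i)).card := by
  classical
  have hinj : ∀ a ∈ Finset.univ.filter (fun k : Fin n => z k = i),
      ∀ b ∈ Finset.univ.filter (fun k : Fin n => z k = i),
        occCount z (a : ℕ) i = occCount z (b : ℕ) i → a = b := by
    intro a ha b hb hab
    simp only [mem_filter, mem_univ, true_and] at ha hb
    rcases lt_trichotomy (a : ℕ) (b : ℕ) with h | h | h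
    · exact absurd hab (ne_of_lt (occCount_strict z i h ha))
    · exact Fin.ext h
    · exact absurd hab.symm (ne_of_lt (occCount_strict z i h hb))
  apply Finset.eq_of_subset_of_card_le
  · intro x hx
    rcases Finset.mem_image.1 hx with ⟨k, hk, rfl⟩
    simp only [mem_filter, mem_univ, true_and] at hk
    exact Finset.mem_range.2 (occCount_lt_fiber_card z i hk)
  · rw [Finset.card_range, Finset.card_image_of_injOn hinj]

end Aux

lemma sum_trunc_reindex (F : ℕ → ℝ) (D : ℕ) : ∀ N : ℕ,
    ∑ j ∈ Finset.range N, F (j - D)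
      = ((min D N : ℕ) : ℝ) * F 0 + ∑ j ∈ Finset.range (N - D), F j
  | 0 => by simp
  | (N + 1) => by
    rw [Finset.sum_range_succ, sum_trunc_reindex F D N]
    rcases lt_or_ge N D with h | h
    · have h1 : N - D = 0 := by omega
      have h2 : N + 1 - D = 0 := by omega
      have h3 : min D N = N := by omega
      have h4 : min D (N + 1) = N + 1 := by omega
      rw [h1, h2, h3, h4]
      simp only [Finset.range_zero, Finset.sum_empty]
      push_cast
      ring
    · have h2 : N + 1 - D = (N - D) + 1 := by omega
      have h3 : min D N = D := by omega
      have h4 : min D (N + 1) = D := by omega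
      rw [h2, h3, h4, Finset.sum_range_succ]
      ring

lemma per_symbol_bound {n : ℕ} (hn : 0 < n) (D N : ℕ) (hN : N ≤ n) :
    ∑ j ∈ Finset.range N,
        (Real.logb 2 ((j : ℝ) + 1/2) - Real.logb 2 (((j - D : ℕ) : ℝ) + 1/2))
      ≤ (D : ℝ) * Real.logb 2 (2 * n) := by
  set F : ℕ → ℝ := fun j => Real.logb 2 ((j : ℝ) + 1/2) with hFdef
  have hF0 : F 0 = -1 := by
    show Real.logb 2 (((0 : ℕ) : ℝ) + 1/2) = -1
    rw [Nat.cast_zero, zero_add, show (1 : ℝ)/2 = 2⁻¹ by norm_num, Real.logb_inv,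
      Real.logb_self_eq_one (by norm_num)]
  have hb2 : (1 : ℝ) < 2 := by norm_num
  have hlog2n : Real.logb 2 (2 * n) = 1 + Real.logb 2 n := by
    rw [Real.logb_mul (by norm_num) (Nat.cast_ne_zero.2 hn.ne')]
    rw [Real.logb_self_eq_one hb2]
  have hsplit : ∑ j ∈ Finset.range (N - D), F j + ∑ j ∈ Finset.Ico (N - D) N, F j
      = ∑ j ∈ Finset.range N, F j := by
    simp only [Finset.range_eq_Ico]
    exact Finset.sum_Ico_consecutive F (Nat.zero_le _) (Nat.sub_le N D)
  have hIco_bound : ∑ j ∈ Finset.Ico (N - D) N, F j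
      ≤ ((min D N : ℕ) : ℝ) * Real.logb 2 n := by
    have hcard : (Finset.Ico (N - D) N).card = min D N := by
      rw [Nat.card_Ico]; omega
    have hbound : ∀ j ∈ Finset.Ico (N - D) N, F j ≤ Real.logb 2 n := by
      intro j hj
      rcases Finset.mem_Ico.1 hj with ⟨_, hjN⟩
      have hjn : j + 1 ≤ n := by omega
      have : (j : ℝ) + 1/2 ≤ (n : ℝ) := by
        have : (j : ℝ) + 1 ≤ (n : ℝ) := by exact_mod_cast hjn
        linarith
      exact Real.logb_le_logb_of_le hb2 (by positivity) this
    calc ∑ j ∈ Finset.Ico (N - D) N, F j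
        ≤ (Finset.Ico (N - D) N).card • Real.logb 2 n :=
          Finset.sum_le_card_nsmul _ _ _ hbound
      _ = ((min D N : ℕ) : ℝ) * Real.logb 2 n := by
          rw [hcard, nsmul_eq_mul]
  have hmain : ∑ j ∈ Finset.range N,
      (Real.logb 2 ((j : ℝ) + 1/2) - Real.logb 2 (((j - D : ℕ) : ℝ) + 1/2))
      = ∑ j ∈ Finset.Ico (N - D) N, F j + ((min D N : ℕ) : ℝ) := by
    rw [Finset.sum_sub_distrib]
    have : ∑ j ∈ Finset.range N, Real.logb 2 (((j - D : ℕ) : ℝ) + 1/2)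
        = ((min D N : ℕ) : ℝ) * F 0 + ∑ j ∈ Finset.range (N - D), F j :=
      sum_trunc_reindex F D N
    rw [this, hF0, ← hsplit]
    ring
  rw [hmain]
  have hlogn_nonneg : 0 ≤ Real.logb 2 (n : ℝ) :=
    Real.logb_nonneg hb2 (by exact_mod_cast hn)
  have hminD : ((min D N : ℕ) : ℝ) ≤ (D : ℝ) := by exact_mod_cast Nat.min_le_left D N
  have hminnonneg : (0 : ℝ) ≤ ((min D N : ℕ) : ℝ) := Nat.cast_nonneg _
  calc ∑ j ∈ Finset.Ico (N - D) N, F j + ((min D N : ℕ) : ℝ)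
      ≤ ((min D N : ℕ) : ℝ) * Real.logb 2 n + ((min D N : ℕ) : ℝ) :=
        add_le_add_left hIco_bound _
    _ = ((min D N : ℕ) : ℝ) * (1 + Real.logb 2 n) := by ring
    _ ≤ (D : ℝ) * (1 + Real.logb 2 n) := by nlinarith
    _ = (D : ℝ) * Real.logb 2 (2 * n) := by rw [hlog2n]

/-- **Noisy KT(b) excess redundancy.** Let `ν` be a nondecreasing update-position
sequence with `ν k ≤ k` and `k + 1 ≤ ν k + b` (0-indexed version of
`k − b ≤ ν_k ≤ k − 1`).  Then for any `zⁿ, wⁿ ∈ Xⁿ`,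
`−log₂ ( p̂ᴷᵀ⁽ᵇ⁾(zⁿ‖wⁿ) / p̂ᴷᵀ(zⁿ) ) ≤ 2|X| (b + d(zⁿ,wⁿ) − 1) log₂(2ne)`,
where `d` is the Hamming distance, `p̂ᴷᵀ(zⁿ) = ∏ₖ (n_{z_k}(z^k) + 1/2)/(k + |X|/2)` and
`p̂ᴷᵀ⁽ᵇ⁾(zⁿ‖wⁿ) = ∏ₖ (n_{z_k}(w^{ν k}) + 1/2)/(ν k + |X|/2)`. -/
theorem noisy_ktb_excess_redundancy {X : Type*} [Fintype X] [DecidableEq X]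
    (hX : 2 ≤ Fintype.card X) {n b : ℕ} (hb : 1 ≤ b)
    (ν : ℕ → ℕ) (hν_mono : Monotone ν)
    (hν_le : ∀ k < n, ν k ≤ k) (hν_ge : ∀ k < n, k + 1 ≤ ν k + b)
    (z w : Fin n → X) :
    -Real.logb 2
        ((∏ k : Fin n, ((occCount w (ν k) (z k) : ℝ) + 1/2) /
            ((ν (k : ℕ) : ℝ) + (Fintype.card X : ℝ) / 2)) /
          (∏ k : Fin n, ((occCount z (k : ℕ) (z k) : ℝ) + 1/2) /
            ((k : ℝ) + (Fintype.card X : ℝ) / 2)))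
      ≤ 2 * (Fintype.card X : ℝ) *
          ((b : ℝ) + ((Finset.univ.filter (fun k : Fin n => z k ≠ w k)).card : ℝ) - 1) *
            Real.logb 2 (2 * n * Real.exp 1) := by
  classical
  rcases Nat.eq_zero_or_pos n with hn0 | hn
  · subst hn0
    simp [Real.logb_zero]
  set m : ℕ := Fintype.card X with hm
  set d : ℕ := (Finset.univ.filter (fun k : Fin n => z k ≠ w k)).card with hd
  set D : ℕ := (b - 1) + d with hD
  have hmpos : (0 : ℝ) < (m : ℝ) / 2 := by
    have : (0:ℕ) < m := lt_of_lt_of_le (by norm_num) hX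
    positivity
  have hb2 : (1 : ℝ) < 2 := by norm_num
  -- positivity of factors
  have hApos : ∀ k : Fin n,
      (0 : ℝ) < ((occCount z (k : ℕ) (z k) : ℝ) + 1/2) / ((k : ℝ) + (m : ℝ) / 2) := by
    intro k
    apply div_pos (by positivity)
    have : (0:ℝ) ≤ (k:ℝ) := Nat.cast_nonneg _
    linarith
  have hBpos : ∀ k : Fin n,
      (0 : ℝ) < ((occCount w (ν k) (z k) : ℝ) + 1/2) / ((ν (k:ℕ) : ℝ) + (m : ℝ) / 2) := by
    intro k
    apply div_pos (by positivity)
    have : (0:ℝ) ≤ (ν (k:ℕ):ℝ) := Nat.cast_nonneg _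
    linarith
  have hPA : (0:ℝ) < ∏ k : Fin n, ((occCount z (k : ℕ) (z k) : ℝ) + 1/2) /
      ((k : ℝ) + (m : ℝ) / 2) := Finset.prod_pos (fun k _ => hApos k)
  have hPB : (0:ℝ) < ∏ k : Fin n, ((occCount w (ν k) (z k) : ℝ) + 1/2) /
      ((ν (k:ℕ) : ℝ) + (m : ℝ) / 2) := Finset.prod_pos (fun k _ => hBpos k)
  rw [Real.logb_div hPB.ne' hPA.ne', neg_sub,
    Real.logb_prod _ _ (fun k _ => (hApos k).ne'),
    Real.logb_prod _ _ (fun k _ => (hBpos k).ne'), ← Finset.sum_sub_distrib]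
  -- pointwise bound
  have hkey : ∀ k : Fin n,
      Real.logb 2 (((occCount z (k : ℕ) (z k) : ℝ) + 1/2) / ((k : ℝ) + (m : ℝ) / 2))
        - Real.logb 2 (((occCount w (ν k) (z k) : ℝ) + 1/2) / ((ν (k:ℕ) : ℝ) + (m : ℝ) / 2))
      ≤ Real.logb 2 ((occCount z (k : ℕ) (z k) : ℝ) + 1/2)
        - Real.logb 2 (((occCount z (k : ℕ) (z k) - D : ℕ) : ℝ) + 1/2) := by
    intro k
    have hkn : (k : ℕ) < n := k.isLt
    have hle := hν_le (k : ℕ) hkn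
    have hge := hν_ge (k : ℕ) hkn
    have hcount : occCount z (k : ℕ) (z k) ≤ occCount w (ν (k:ℕ)) (z k) + D := by
      have h1 := occCount_le_occCount_add z w (z k) (ν (k:ℕ)) (k:ℕ) hle
      rw [← hd] at h1
      omega
    have hsubles : occCount z (k : ℕ) (z k) - D ≤ occCount w (ν (k:ℕ)) (z k) := by omega
    rw [Real.logb_div (by positivity) (by
        have : (0:ℝ) ≤ (k:ℝ) := Nat.cast_nonneg _
        intro hcon; nlinarith),
      Real.logb_div (by positivity) (by
        have : (0:ℝ) ≤ (ν (k:ℕ):ℝ) := Nat.cast_nonneg _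
        intro hcon; nlinarith)]
    have h2 : Real.logb 2 ((ν (k:ℕ) : ℝ) + (m : ℝ)/2) ≤ Real.logb 2 ((k : ℝ) + (m : ℝ)/2) := by
      apply Real.logb_le_logb_of_le hb2 (by
        have : (0:ℝ) ≤ (ν (k:ℕ):ℝ) := Nat.cast_nonneg _
        linarith)
      have : ((ν (k:ℕ) : ℝ)) ≤ (k : ℝ) := by exact_mod_cast hle
      linarith
    have h3 : Real.logb 2 (((occCount z (k : ℕ) (z k) - D : ℕ) : ℝ) + 1/2)
        ≤ Real.logb 2 ((occCount w (ν (k:ℕ)) (z k) : ℝ) + 1/2) := by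
      apply Real.logb_le_logb_of_le hb2 (by positivity)
      have : ((occCount z (k : ℕ) (z k) - D : ℕ) : ℝ) ≤ (occCount w (ν (k:ℕ)) (z k) : ℝ) := by
        exact_mod_cast hsubles
      linarith
    linarith
  calc ∑ k : Fin n,
        (Real.logb 2 (((occCount z (k : ℕ) (z k) : ℝ) + 1/2) / ((k : ℝ) + (m : ℝ) / 2))
          - Real.logb 2 (((occCount w (ν k) (z k) : ℝ) + 1/2) / ((ν (k:ℕ) : ℝ) + (m : ℝ) / 2)))
      ≤ ∑ k : Fin n,
        (Real.logb 2 ((occCount z (k : ℕ) (z k) : ℝ) + 1/2)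
          - Real.logb 2 (((occCount z (k : ℕ) (z k) - D : ℕ) : ℝ) + 1/2)) :=
        Finset.sum_le_sum (fun k _ => hkey k)
    _ = ∑ i : X, ∑ k ∈ Finset.univ.filter (fun k : Fin n => z k = i),
        (Real.logb 2 ((occCount z (k : ℕ) i : ℝ) + 1/2)
          - Real.logb 2 (((occCount z (k : ℕ) i - D : ℕ) : ℝ) + 1/2)) := by
        rw [← Finset.sum_fiberwise Finset.univ (fun k : Fin n => z k)
          (fun k => Real.logb 2 ((occCount z (k : ℕ) (z k) : ℝ) + 1/2)
            - Real.logb 2 (((occCount z (k : ℕ) (z k) - D : ℕ) : ℝ) + 1/2))]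
        refine Finset.sum_congr rfl (fun i _ => Finset.sum_congr rfl (fun k hk => ?_))
        have : z k = i := (Finset.mem_filter.1 hk).2
        rw [this]
    _ ≤ ∑ i : X, (D : ℝ) * Real.logb 2 (2 * n) := by
        refine Finset.sum_le_sum (fun i _ => ?_)
        have himg := image_occCount_eq_range z i
        have hinj : ∀ a ∈ Finset.univ.filter (fun k : Fin n => z k = i),
            ∀ b' ∈ Finset.univ.filter (fun k : Fin n => z k = i),
              occCount z (a : ℕ) i = occCount z (b' : ℕ) i → a = b' := by
          intro a ha b' hb' hab
          simp only [Finset.mem_filter, Finset.mem_univ, true_and] at ha hb'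
          rcases lt_trichotomy (a : ℕ) (b' : ℕ) with h | h | h
          · exact absurd hab (ne_of_lt (occCount_strict z i h ha))
          · exact Fin.ext h
          · exact absurd hab.symm (ne_of_lt (occCount_strict z i h hb'))
        have hNle : (Finset.univ.filter (fun k : Fin n => z k = i)).card ≤ n := by
          simpa using Finset.card_le_card
            (Finset.filter_subset (fun k : Fin n => z k = i) Finset.univ)
        calc ∑ k ∈ Finset.univ.filter (fun k : Fin n => z k = i),
              (Real.logb 2 ((occCount z (k : ℕ) i : ℝ) + 1/2)
                - Real.logb 2 (((occCount z (k : ℕ) i - D : ℕ) : ℝ) + 1/2))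
            = ∑ j ∈ Finset.range (Finset.univ.filter (fun k : Fin n => z k = i)).card,
              (Real.logb 2 ((j : ℝ) + 1/2) - Real.logb 2 (((j - D : ℕ) : ℝ) + 1/2)) := by
              rw [← himg, Finset.sum_image hinj]
          _ ≤ (D : ℝ) * Real.logb 2 (2 * n) := per_symbol_bound hn D _ hNle
    _ = (m : ℝ) * ((D : ℝ) * Real.logb 2 (2 * n)) := by
        rw [Finset.sum_const, Finset.card_univ, nsmul_eq_mul, hm]
    _ ≤ 2 * (m : ℝ) * ((b : ℝ) + (d : ℝ) - 1) * Real.logb 2 (2 * n * Real.exp 1) := by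
        have hDr : (D : ℝ) = (b : ℝ) + (d : ℝ) - 1 := by
          rw [hD]
          push_cast [Nat.cast_sub hb]
          ring
        have hL1 : (0:ℝ) ≤ Real.logb 2 (2 * n) := by
          apply Real.logb_nonneg hb2
          have : (1:ℝ) ≤ (n:ℝ) := by exact_mod_cast hn
          linarith
        have hL12 : Real.logb 2 (2 * n) ≤ Real.logb 2 (2 * n * Real.exp 1) := by
          apply Real.logb_le_logb_of_le hb2 (by
            have : (1:ℝ) ≤ (n:ℝ) := by exact_mod_cast hn
            linarith)
          have he : (1:ℝ) ≤ Real.exp 1 := by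
            have := Real.exp_pos 1
            nlinarith [Real.add_one_le_exp 1]
          have : (0:ℝ) ≤ 2 * (n:ℝ) := by positivity
          nlinarith
        have hmnn : (0:ℝ) ≤ (m : ℝ) := Nat.cast_nonneg _
        have hDnn : (0:ℝ) ≤ (D : ℝ) := Nat.cast_nonneg _
        rw [← hDr]
        have hMD : (0:ℝ) ≤ (m:ℝ) * (D:ℝ) := mul_nonneg hmnn hDnn
        nlinarith [mul_le_mul_of_nonneg_left hL12 hMD, mul_nonneg hMD hL1]
end

section
/- Let Z^n be a random sequence in a finite alphabet X and B^n a random binary sequence independent of Z^n, uniformly distributed over the set of binary sequences of length n with exactly m ones. Let Z^n↓B^n denote the subsequence of Z^n at positions where B^n has a 1. Then for any τ > 0, P( ‖p_emp(Z^n) − p_emp(Z^n↓B^n)‖_∞ > τ ) ≤ 2|X| exp(−2mτ²). -/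
open MeasureTheory ProbabilityTheory Finset
open scoped ENNReal

-- count of m-subsets of univ containing a fixed T
lemma card_supersets {α : Type*} [DecidableEq α] [Fintype α] (T : Finset α) {m : ℕ}
    (hT : T.card ≤ m) :
    ((powersetCard m (univ : Finset α)).filter (fun S => T ⊆ S)).card
      = (Fintype.card α - T.card).choose (m - T.card) := by
  rw [← Finset.card_compl T, ← Finset.card_powersetCard]
  apply Finset.card_bij' (fun S _ => S \ T) (fun S' _ => S' ∪ T)
  · intro S hS
    simp only [mem_filter, mem_powersetCard] at hS
    rw [mem_powersetCard]
    refine ⟨fun x hx => ?_, ?_⟩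
    · simp only [mem_compl]
      exact fun hxT => (mem_sdiff.mp hx).2 hxT
    · rw [card_sdiff_of_subset hS.2, hS.1.2]
  · intro S' hS'
    rw [mem_powersetCard] at hS'
    simp only [mem_filter, mem_powersetCard]
    have hdisj : Disjoint S' T := by
      refine Finset.disjoint_left.mpr fun x hx hxT => ?_
      have := hS'.1 hx
      simp only [mem_compl] at this
      exact this hxT
    refine ⟨⟨subset_univ _, ?_⟩, subset_union_right⟩
    rw [card_union_of_disjoint hdisj, hS'.2]
    omega
  · intro S hS
    simp only [mem_filter] at hS
    exact sdiff_union_of_subset hS.2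
  · intro S' hS'
    rw [mem_powersetCard] at hS'
    have hdisj : Disjoint S' T := by
      refine Finset.disjoint_left.mpr fun x hx hxT => ?_
      have := hS'.1 hx
      simp only [mem_compl] at this
      exact this hxT
    exact union_sdiff_cancel_right hdisj

-- descFactorial inequality
lemma descFactorial_mul_pow_le {K n : ℕ} (h : K ≤ n) (j : ℕ) :
    K.descFactorial j * n ^ j ≤ n.descFactorial j * K ^ j := by
  induction j with
  | zero => simp
  | succ j ih =>
    rw [Nat.descFactorial_succ, Nat.descFactorial_succ, pow_succ, pow_succ]
    calc (K - j) * K.descFactorial j * (n ^ j * n)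
        = ((K - j) * n) * (K.descFactorial j * n ^ j) := by ring
      _ ≤ ((n - j) * K) * (n.descFactorial j * K ^ j) := by
          apply Nat.mul_le_mul _ ih
          calc (K - j) * n = K * n - j * n := by rw [Nat.sub_mul]
            _ ≤ n * K - j * K := by
                rw [Nat.mul_comm K n]
                exact Nat.sub_le_sub_left (Nat.mul_le_mul_left j h) _
            _ = (n - j) * K := by rw [Nat.sub_mul]
      _ = (n - j) * n.descFactorial j * (K ^ j * K) := by ring

lemma choose_mul_pow_le {K n : ℕ} (h : K ≤ n) (j : ℕ) :
    K.choose j * n ^ j ≤ n.choose j * K ^ j := by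
  have := descFactorial_mul_pow_le h j
  rw [Nat.descFactorial_eq_factorial_mul_choose, Nat.descFactorial_eq_factorial_mul_choose] at this
  have hfac : 0 < j.factorial := Nat.factorial_pos j
  calc K.choose j * n ^ j = (j.factorial * (K.choose j * n ^ j)) / j.factorial := by
        rw [Nat.mul_div_cancel_left _ hfac]
    _ ≤ (j.factorial * (n.choose j * K ^ j)) / j.factorial := by
        apply Nat.div_le_div_right
        calc j.factorial * (K.choose j * n ^ j) = j.factorial * K.choose j * n ^ j := by ring
          _ ≤ j.factorial * n.choose j * K ^ j := this
          _ = j.factorial * (n.choose j * K ^ j) := by ring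
    _ = n.choose j * K ^ j := by rw [Nat.mul_div_cancel_left _ hfac]

lemma mgf_count_le {α : Type*} [Fintype α] [DecidableEq α] (A : Finset α) {m : ℕ}
    (hm : m ≤ Fintype.card α) (hn : 0 < Fintype.card α) {y : ℝ} (hy : 0 ≤ y) :
    ∑ S ∈ powersetCard m (univ : Finset α), (1 + y) ^ (S ∩ A).card
      ≤ ((Fintype.card α).choose m : ℝ) * (1 + (A.card / Fintype.card α) * y) ^ m := by
  set n := Fintype.card α with hn_def
  set K := A.card with hK_def
  have hKn : K ≤ n := by simpa [hK_def, hn_def] using Finset.card_le_univ A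
  set x : ℝ := (K / n) * y with hx_def
  have hx : 0 ≤ x := by positivity
  -- step 1: expand each power as a sum over subsets T of A
  have step1 : ∀ S ∈ powersetCard m (univ : Finset α),
      (1 + y : ℝ) ^ (S ∩ A).card
        = ∑ T ∈ A.powerset, if T ⊆ S then y ^ T.card else 0 := by
    intro S _
    rw [← Finset.sum_filter]
    have hps : A.powerset.filter (fun T => T ⊆ S) = (S ∩ A).powerset := by
      ext T
      simp only [mem_filter, mem_powerset, subset_inter_iff]
      tauto
    rw [hps]
    have := Finset.sum_pow_mul_eq_add_pow y 1 (S ∩ A)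
    simp only [one_pow, mul_one] at this
    rw [add_comm 1 y, ← this]
  rw [Finset.sum_congr rfl step1, Finset.sum_comm]
  -- step 2: inner sums count supersets
  have step2 : ∀ T ∈ A.powerset,
      (∑ S ∈ powersetCard m (univ : Finset α), if T ⊆ S then (y:ℝ) ^ T.card else 0)
        = (((powersetCard m (univ : Finset α)).filter (fun S => T ⊆ S)).card : ℝ)
            * y ^ T.card := by
    intro T _
    rw [← Finset.sum_filter, Finset.sum_const, nsmul_eq_mul]
  rw [Finset.sum_congr rfl step2]
  -- step 3: group by cardinality
  rw [Finset.powerset_card_biUnion, Finset.sum_biUnion (A.pairwise_disjoint_powersetCard.set_pairwise _)]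
  -- step 4+5: bound the j-th group
  have key : ∀ j ∈ range (K + 1),
      (∑ T ∈ powersetCard j A,
        (((powersetCard m (univ : Finset α)).filter (fun S => T ⊆ S)).card : ℝ) * y ^ T.card)
      ≤ (n.choose m : ℝ) * (m.choose j : ℝ) * x ^ j := by
    intro j _
    by_cases hjm : j ≤ m
    · have heach : ∀ T ∈ powersetCard j A,
          (((powersetCard m (univ : Finset α)).filter (fun S => T ⊆ S)).card : ℝ) * y ^ T.card
            = ((n - j).choose (m - j) : ℝ) * y ^ j := by
        intro T hT
        have hTc : T.card = j := (mem_powersetCard.mp hT).2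
        rw [card_supersets T (hTc ▸ hjm), hTc]
      rw [Finset.sum_congr rfl heach, Finset.sum_const, Finset.card_powersetCard, nsmul_eq_mul]
      -- now: C(K,j) * (C(n-j,m-j) * y^j) ≤ C(n,m)*C(m,j)*x^j
      have hid : (n.choose m : ℝ) * (m.choose j : ℝ) = (n.choose j : ℝ) * ((n - j).choose (m - j) : ℝ) := by
        have := Nat.choose_mul (n := n) hjm
        exact_mod_cast congrArg (fun t : ℕ => (t : ℝ)) this
      rw [hid, hx_def, mul_pow, div_pow]
      have h1 : (K.choose j : ℝ) ≤ (n.choose j : ℝ) * ((K:ℝ) ^ j / (n:ℝ) ^ j) := by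
        rw [mul_div_assoc', le_div_iff₀ (pow_pos (by exact_mod_cast hn) j)]
        exact_mod_cast choose_mul_pow_le hKn j
      calc (K.choose j : ℝ) * (((n - j).choose (m - j) : ℝ) * y ^ j)
          ≤ ((n.choose j : ℝ) * ((K:ℝ) ^ j / (n:ℝ) ^ j)) * (((n - j).choose (m - j) : ℝ) * y ^ j) := by
            apply mul_le_mul_of_nonneg_right h1 (by positivity)
        _ = (n.choose j : ℝ) * ((n - j).choose (m - j) : ℝ) * ((K:ℝ) ^ j / (n:ℝ) ^ j * y ^ j) := by
            ring
    · push_neg at hjm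
      have heach : ∀ T ∈ powersetCard j A,
          (((powersetCard m (univ : Finset α)).filter (fun S => T ⊆ S)).card : ℝ) * y ^ T.card
            = 0 := by
        intro T hT
        have hTc : T.card = j := (mem_powersetCard.mp hT).2
        have : (powersetCard m (univ : Finset α)).filter (fun S => T ⊆ S) = ∅ := by
          rw [Finset.filter_eq_empty_iff]
          intro S hS hTS
          have := Finset.card_le_card hTS
          rw [hTc, (mem_powersetCard.mp hS).2] at this
          omega
        rw [this]
        simp
      rw [Finset.sum_congr rfl heach, Finset.sum_const_zero]
      positivity
  calc ∑ j ∈ range (K + 1), (∑ T ∈ powersetCard j A,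
        (((powersetCard m (univ : Finset α)).filter (fun S => T ⊆ S)).card : ℝ) * y ^ T.card)
      ≤ ∑ j ∈ range (K + 1), (n.choose m : ℝ) * (m.choose j : ℝ) * x ^ j :=
        Finset.sum_le_sum key
    _ ≤ ∑ j ∈ range (K + m + 1), (n.choose m : ℝ) * (m.choose j : ℝ) * x ^ j := by
        apply Finset.sum_le_sum_of_subset_of_nonneg
        · exact Finset.range_subset_range.mpr (by omega)
        · intro j _ _; positivity
    _ = ∑ j ∈ range (m + 1), (n.choose m : ℝ) * (m.choose j : ℝ) * x ^ j := by
        symm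
        apply Finset.sum_subset (Finset.range_subset_range.mpr (by omega))
        intro j _ hj
        rw [mem_range, not_lt] at hj
        have hz : m.choose j = 0 := Nat.choose_eq_zero_of_lt (by omega)
        rw [hz]
        simp
    _ = (n.choose m : ℝ) * (1 + x) ^ m := by
        simp only [mul_assoc]
        rw [← Finset.mul_sum]
        congr 1
        rw [add_comm 1 x, add_pow]
        simp [one_pow, mul_comm]

lemma hoeffding_aux {p t : ℝ} (hp0 : 0 ≤ p) (hp1 : p ≤ 1) (ht : 0 ≤ t) :
    1 - p + p * Real.exp t ≤ Real.exp (p * t + t ^ 2 / 8) := by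
  set q : ℝ := 1 - p with hq
  have hq0 : 0 ≤ q := by linarith
  clear_value q
  have hu : ∀ s : ℝ, 0 < q + p * Real.exp s := by
    intro s
    rcases eq_or_lt_of_le hp0 with h | h
    · simp [← h, hq]
    · have := Real.exp_pos s
      nlinarith
  set g : ℝ → ℝ := fun s => p + s / 4 - p * Real.exp s / (q + p * Real.exp s) with hgdef
  set f : ℝ → ℝ := fun s => p * s + s ^ 2 / 8 - Real.log (q + p * Real.exp s) with hfdef
  have hu' : ∀ s : ℝ, HasDerivAt (fun s => q + p * Real.exp s) (p * Real.exp s) s := by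
    intro s
    exact ((Real.hasDerivAt_exp s).const_mul p).const_add q
  have hfd : ∀ s : ℝ, HasDerivAt f (g s) s := by
    intro s
    have h1 : HasDerivAt (fun s : ℝ => p * s + s ^ 2 / 8) (p + s / 4) s := by
      have := ((hasDerivAt_id s).const_mul p).add ((hasDerivAt_pow 2 s).div_const 8)
      refine this.congr_deriv ?_
      ring
    have h2 : HasDerivAt (fun s => Real.log (q + p * Real.exp s))
        (p * Real.exp s / (q + p * Real.exp s)) s := (hu' s).log (ne_of_gt (hu s))
    exact h1.sub h2
  have hgd : ∀ s : ℝ, HasDerivAt g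
      (1 / 4 - q * (p * Real.exp s) / (q + p * Real.exp s) ^ 2) s := by
    intro s
    have h1 : HasDerivAt (fun s : ℝ => p + s / 4) (1 / 4) s := by
      have := ((hasDerivAt_id s).div_const 4).const_add p
      exact this
    have hv' : HasDerivAt (fun s => p * Real.exp s) (p * Real.exp s) s :=
      (Real.hasDerivAt_exp s).const_mul p
    have h2 : HasDerivAt (fun s => p * Real.exp s / (q + p * Real.exp s))
        ((p * Real.exp s * (q + p * Real.exp s) - p * Real.exp s * (p * Real.exp s))
          / (q + p * Real.exp s) ^ 2) s := hv'.div (hu' s) (ne_of_gt (hu s))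
    have := h1.sub h2
    refine this.congr_deriv ?_
    field_simp
    ring
  -- g is nonnegative on [0, ∞)
  have hg_nonneg : ∀ s : ℝ, 0 ≤ s → 0 ≤ g s := by
    intro s hs
    have hmono : MonotoneOn g (Set.Ici (0:ℝ)) := by
      apply monotoneOn_of_deriv_nonneg (convex_Ici 0)
      · exact (Differentiable.continuous fun s => (hgd s).differentiableAt).continuousOn
      · exact fun s _ => ((hgd s).differentiableAt).differentiableWithinAt
      · intro s _
        rw [(hgd s).deriv]
        have hE := Real.exp_pos s
        have h4 : 4 * (q * (p * Real.exp s)) ≤ (q + p * Real.exp s) ^ 2 := by nlinarith [sq_nonneg (q - p * Real.exp s)]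
        have hsq : (0:ℝ) < (q + p * Real.exp s) ^ 2 := pow_pos (hu s) 2
        rw [sub_nonneg, div_le_iff₀ hsq]
        show q * (p * Real.exp s) ≤ 1 / 4 * (q + p * Real.exp s) ^ 2
        linarith
    have hg0 : g 0 = 0 := by
      simp only [hgdef]
      rw [Real.exp_zero]
      have : q + p * 1 = 1 := by rw [hq]; ring
      rw [this]
      ring
    have := hmono (Set.self_mem_Ici) (Set.mem_Ici.mpr hs) hs
    rw [hg0] at this
    exact this
  -- hence f is nonneg on [0, ∞)
  have hf_nonneg : 0 ≤ f t := by
    have hmono : MonotoneOn f (Set.Ici (0:ℝ)) := by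
      apply monotoneOn_of_deriv_nonneg (convex_Ici 0)
      · exact (Differentiable.continuous fun s => (hfd s).differentiableAt).continuousOn
      · exact fun s _ => ((hfd s).differentiableAt).differentiableWithinAt
      · intro s hs
        rw [(hfd s).deriv]
        exact hg_nonneg s (le_of_lt (by simpa using hs))
    have hf0 : f 0 = 0 := by
      simp only [hfdef]
      rw [Real.exp_zero]
      have : q + p * 1 = 1 := by rw [hq]; ring
      rw [this, Real.log_one]
      ring
    have := hmono (Set.self_mem_Ici) (Set.mem_Ici.mpr ht) ht
    rw [hf0] at this
    exact this
  -- conclude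
  have : Real.log (q + p * Real.exp t) ≤ p * t + t ^ 2 / 8 := by
    simp only [hfdef] at hf_nonneg
    linarith
  show q + p * Real.exp t ≤ Real.exp (p * t + t ^ 2 / 8)
  rw [← Real.exp_log (hu t)]
  exact Real.exp_le_exp.mpr this

lemma upper_tail_count {α : Type*} [Fintype α] [DecidableEq α] (A : Finset α) {m : ℕ}
    (hm : m ≤ Fintype.card α) (hn : 0 < Fintype.card α) {τ : ℝ} (hτ : 0 < τ) :
    (((powersetCard m (univ : Finset α)).filter
        (fun S => (m : ℝ) * ((A.card : ℝ) / (Fintype.card α : ℝ) + τ) ≤ ((S ∩ A).card : ℝ))).card : ℝ)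
      ≤ ((Fintype.card α).choose m : ℝ) * Real.exp (-2 * m * τ ^ 2) := by
  set n := Fintype.card α with hn_def
  set p : ℝ := (A.card : ℝ) / (n : ℝ) with hp_def
  have hp0 : 0 ≤ p := by positivity
  have hp1 : p ≤ 1 := by
    rw [hp_def, div_le_one (by exact_mod_cast hn)]
    exact_mod_cast Finset.card_le_univ A
  set lam : ℝ := 4 * τ with hlam_def
  have hlam : 0 < lam := by positivity
  set y : ℝ := Real.exp lam - 1 with hy_def
  have hy : 0 ≤ y := by
    rw [hy_def, sub_nonneg]
    exact Real.one_le_exp (le_of_lt hlam)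
  have h1y : (1 : ℝ) + y = Real.exp lam := by rw [hy_def]; ring
  set Bad := (powersetCard m (univ : Finset α)).filter
      (fun S => (m : ℝ) * (p + τ) ≤ ((S ∩ A).card : ℝ)) with hBad_def
  have hexp_pos : 0 < Real.exp (lam * (m * (p + τ))) := Real.exp_pos _
  -- each bad S contributes at least exp(lam * m * (p+τ))
  have hlow : (Bad.card : ℝ) * Real.exp (lam * (m * (p + τ)))
      ≤ ∑ S ∈ Bad, (1 + y) ^ (S ∩ A).card := by
    rw [← nsmul_eq_mul, ← Finset.sum_const]
    apply Finset.sum_le_sum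
    intro S hS
    rw [hBad_def, Finset.mem_filter] at hS
    rw [h1y, ← Real.exp_nat_mul]
    apply Real.exp_le_exp.mpr
    calc lam * (m * (p + τ)) ≤ lam * ((S ∩ A).card : ℝ) :=
          mul_le_mul_of_nonneg_left hS.2 (le_of_lt hlam)
      _ = ((S ∩ A).card : ℝ) * lam := mul_comm _ _
  have hmid : ∑ S ∈ Bad, ((1 : ℝ) + y) ^ (S ∩ A).card
      ≤ ∑ S ∈ powersetCard m (univ : Finset α), (1 + y) ^ (S ∩ A).card := by
    apply Finset.sum_le_sum_of_subset_of_nonneg (Finset.filter_subset _ _)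
    intro S _ _
    positivity
  have hup : ∑ S ∈ powersetCard m (univ : Finset α), ((1 : ℝ) + y) ^ (S ∩ A).card
      ≤ (n.choose m : ℝ) * Real.exp (m * (p * lam + lam ^ 2 / 8)) := by
    calc ∑ S ∈ powersetCard m (univ : Finset α), ((1 : ℝ) + y) ^ (S ∩ A).card
        ≤ (n.choose m : ℝ) * (1 + p * y) ^ m := mgf_count_le A hm hn hy
      _ ≤ (n.choose m : ℝ) * Real.exp (m * (p * lam + lam ^ 2 / 8)) := by
          apply mul_le_mul_of_nonneg_left _ (by positivity)
          rw [Real.exp_nat_mul]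
          apply pow_le_pow_left₀ (by positivity)
          calc (1 : ℝ) + p * y = 1 - p + p * Real.exp lam := by rw [hy_def]; ring
            _ ≤ Real.exp (p * lam + lam ^ 2 / 8) := hoeffding_aux hp0 hp1 (le_of_lt hlam)
  have hfinal : (Bad.card : ℝ) * Real.exp (lam * (m * (p + τ)))
      ≤ (n.choose m : ℝ) * Real.exp (m * (p * lam + lam ^ 2 / 8)) :=
    le_trans hlow (le_trans hmid hup)
  rw [← le_div_iff₀ hexp_pos] at hfinal
  calc (Bad.card : ℝ)
      ≤ (n.choose m : ℝ) * Real.exp (m * (p * lam + lam ^ 2 / 8))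
          / Real.exp (lam * (m * (p + τ))) := hfinal
    _ = (n.choose m : ℝ) * Real.exp (-2 * m * τ ^ 2) := by
        rw [mul_div_assoc, ← Real.exp_sub]
        congr 2
        rw [hlam_def]
        ring

lemma two_sided_tail_count {α : Type*} [Fintype α] [DecidableEq α] (A : Finset α) {m : ℕ}
    (hm1 : 1 ≤ m) (hm : m ≤ Fintype.card α) {τ : ℝ} (hτ : 0 < τ) :
    (((powersetCard m (univ : Finset α)).filter
        (fun S => τ < |(A.card : ℝ) / (Fintype.card α : ℝ) - ((S ∩ A).card : ℝ) / m|)).card : ℝ)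
      ≤ 2 * ((Fintype.card α).choose m : ℝ) * Real.exp (-2 * m * τ ^ 2) := by
  set n := Fintype.card α with hn_def
  have hn : 0 < n := lt_of_lt_of_le hm1 hm
  have hnR : (0:ℝ) < n := by exact_mod_cast hn
  have hmR : (0:ℝ) < m := by exact_mod_cast hm1
  set P1 : Finset α → Prop := fun S => (m : ℝ) * ((A.card : ℝ) / (n : ℝ) + τ) ≤ ((S ∩ A).card : ℝ)
    with hP1_def
  set P2 : Finset α → Prop := fun S => (m : ℝ) * ((Aᶜ.card : ℝ) / (n : ℝ) + τ) ≤ ((S ∩ Aᶜ).card : ℝ)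
    with hP2_def
  have hsub : (powersetCard m (univ : Finset α)).filter
        (fun S => τ < |(A.card : ℝ) / (n : ℝ) - ((S ∩ A).card : ℝ) / m|)
      ⊆ ((powersetCard m (univ : Finset α)).filter P1)
          ∪ ((powersetCard m (univ : Finset α)).filter P2) := by
    intro S hS
    rw [Finset.mem_filter] at hS
    obtain ⟨hS𝒮, habs⟩ := hS
    have hScard : S.card = m := (Finset.mem_powersetCard.mp hS𝒮).2
    have hsplit : ((S ∩ Aᶜ).card : ℝ) = (m : ℝ) - ((S ∩ A).card : ℝ) := by
      have h1 : (S ∩ A).card + (S \ A).card = S.card := Finset.card_inter_add_card_sdiff S A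
      rw [Finset.sdiff_eq_inter_compl, hScard] at h1
      have := congrArg (fun t : ℕ => (t : ℝ)) h1
      push_cast at this
      linarith
    have hcompl : ((Aᶜ).card : ℝ) = (n : ℝ) - (A.card : ℝ) := by
      rw [Finset.card_compl]
      push_cast [Nat.cast_sub (Finset.card_le_univ A)]
      rfl
    rw [Finset.mem_union, Finset.mem_filter, Finset.mem_filter]
    rcases lt_abs.mp habs with h | h
    · -- p - h/m > τ  ⇒ P2
      right
      refine ⟨hS𝒮, ?_⟩
      simp only [hP2_def]
      have hdiv : ((S ∩ A).card : ℝ) / m < (A.card : ℝ) / n - τ := by linarith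
      have : ((S ∩ A).card : ℝ) < m * ((A.card : ℝ) / n - τ) := by
        rw [← div_lt_iff₀' hmR]
        exact hdiv
      rw [hsplit, hcompl]
      have heq : (m : ℝ) * (((n : ℝ) - (A.card : ℝ)) / n + τ)
          = (m : ℝ) - m * ((A.card : ℝ) / n - τ) := by
        field_simp
        ring
      rw [heq]
      linarith
    · -- h/m - p > τ  ⇒ P1
      left
      refine ⟨hS𝒮, ?_⟩
      simp only [hP1_def]
      have hdiv : (A.card : ℝ) / n + τ < ((S ∩ A).card : ℝ) / m := by linarith
      have : (m : ℝ) * ((A.card : ℝ) / n + τ) < ((S ∩ A).card : ℝ) := by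
        rw [mul_comm, ← lt_div_iff₀ hmR]
        exact hdiv
      linarith
  calc ((((powersetCard m (univ : Finset α)).filter
        (fun S => τ < |(A.card : ℝ) / (n : ℝ) - ((S ∩ A).card : ℝ) / m|)).card : ℕ) : ℝ)
      ≤ ((((powersetCard m (univ : Finset α)).filter P1)
          ∪ ((powersetCard m (univ : Finset α)).filter P2)).card : ℝ) := by
        exact_mod_cast Finset.card_le_card hsub
    _ ≤ ((((powersetCard m (univ : Finset α)).filter P1).card : ℝ)
          + (((powersetCard m (univ : Finset α)).filter P2).card : ℝ)) := by
        exact_mod_cast Finset.card_union_le _ _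
    _ ≤ (n.choose m : ℝ) * Real.exp (-2 * m * τ ^ 2)
          + (n.choose m : ℝ) * Real.exp (-2 * m * τ ^ 2) := by
        apply add_le_add
        · exact upper_tail_count A hm hn hτ
        · exact upper_tail_count Aᶜ hm hn hτ
    _ = 2 * (n.choose m : ℝ) * Real.exp (-2 * m * τ ^ 2) := by ring

lemma count_bad_b {X : Type*} [Fintype X] [Nonempty X] [DecidableEq X]
    {n m : ℕ} (hm1 : 1 ≤ m) (hmn : m ≤ n) (z : Fin n → X) {τ : ℝ} (hτ : 0 < τ)
    [DecidablePred fun b : Fin n → Bool =>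
        (univ.filter (fun k => b k = true)).card = m ∧
        τ < univ.sup' Finset.univ_nonempty (fun i : X =>
          |((univ.filter (fun k => z k = i)).card : ℝ) / n -
            ((univ.filter (fun k => b k = true ∧ z k = i)).card : ℝ) / m|)] :
    (((univ : Finset (Fin n → Bool))).filter (fun b =>
        (univ.filter (fun k => b k = true)).card = m ∧
        τ < univ.sup' Finset.univ_nonempty (fun i : X =>
          |((univ.filter (fun k => z k = i)).card : ℝ) / n -
            ((univ.filter (fun k => b k = true ∧ z k = i)).card : ℝ) / m|))).card
      ≤ 2 * (Fintype.card X : ℝ) * (n.choose m : ℝ) * Real.exp (-2 * m * τ ^ 2) := by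
  classical
  -- union bound over symbols i
  set F := fun (i : X) => ((univ : Finset (Fin n → Bool))).filter (fun b =>
      (univ.filter (fun k => b k = true)).card = m ∧
      τ < |((univ.filter (fun k => z k = i)).card : ℝ) / n -
            ((univ.filter (fun k => b k = true ∧ z k = i)).card : ℝ) / m|) with hF_def
  have hsub : (((univ : Finset (Fin n → Bool))).filter (fun b =>
        (univ.filter (fun k => b k = true)).card = m ∧
        τ < univ.sup' Finset.univ_nonempty (fun i : X =>
          |((univ.filter (fun k => z k = i)).card : ℝ) / n -
            ((univ.filter (fun k => b k = true ∧ z k = i)).card : ℝ) / m|)))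
      ⊆ (univ : Finset X).biUnion F := by
    intro b hb
    rw [Finset.mem_filter] at hb
    obtain ⟨-, hcard, hsup⟩ := hb
    rw [Finset.lt_sup'_iff] at hsup
    obtain ⟨i, -, hi⟩ := hsup
    rw [Finset.mem_biUnion]
    exact ⟨i, Finset.mem_univ i, by rw [hF_def, Finset.mem_filter]; exact ⟨Finset.mem_univ b, hcard, hi⟩⟩
  have hcount : ∀ i : X, ((F i).card : ℝ) ≤ 2 * (n.choose m : ℝ) * Real.exp (-2 * m * τ ^ 2) := by
    intro i
    set A : Finset (Fin n) := univ.filter (fun k => z k = i) with hA_def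
    -- biject bad b's with bad m-subsets
    have hbij : (F i).card = ((powersetCard m (univ : Finset (Fin n))).filter
        (fun S => τ < |(A.card : ℝ) / (Fintype.card (Fin n) : ℝ) - ((S ∩ A).card : ℝ) / m|)).card := by
      apply Finset.card_bij (fun b _ => univ.filter (fun k => b k = true))
      · intro b hb
        rw [hF_def, Finset.mem_filter] at hb
        obtain ⟨-, hcard, hi⟩ := hb
        rw [Finset.mem_filter, Finset.mem_powersetCard]
        refine ⟨⟨Finset.subset_univ _, hcard⟩, ?_⟩
        have hinter : (univ.filter (fun k => b k = true)) ∩ A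
            = univ.filter (fun k => b k = true ∧ z k = i) := by
          rw [hA_def, ← Finset.filter_and]
        rw [hinter, Fintype.card_fin]
        exact hi
      · intro b₁ h₁ b₂ h₂ heq
        funext k
        have := Finset.ext_iff.mp heq k
        simp only [Finset.mem_filter, Finset.mem_univ, true_and] at this
        by_cases hb : b₁ k = true
        · rw [hb, (this.mp hb).symm]
        · rw [Bool.not_eq_true] at hb
          rw [hb]
          by_cases hb2 : b₂ k = true
          · exact absurd (this.mpr hb2) (by rw [hb]; simp)
          · rw [Bool.not_eq_true] at hb2; rw [hb2]
      · intro S hS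
        rw [Finset.mem_filter, Finset.mem_powersetCard] at hS
        obtain ⟨⟨-, hScard⟩, hSbad⟩ := hS
        refine ⟨fun k => k ∈ S, ?_, ?_⟩
        · rw [hF_def, Finset.mem_filter]
          have hfe : univ.filter (fun k => (decide (k ∈ S)) = true) = S := by
            ext k; simp
          refine ⟨Finset.mem_univ _, ?_, ?_⟩
          · rw [hfe]; exact hScard
          · have hinter : univ.filter (fun k => (decide (k ∈ S)) = true ∧ z k = i)
                = S ∩ A := by
              rw [hA_def, Finset.filter_and, hfe]
            rw [hinter]
            rw [Fintype.card_fin] at hSbad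
            exact hSbad
        · ext k; simp
    rw [hbij]
    simp only [Fintype.card_fin]
    have := two_sided_tail_count A hm1 (by rw [Fintype.card_fin]; exact hmn) hτ
    rw [Fintype.card_fin] at this
    exact this
  calc (((((univ : Finset (Fin n → Bool))).filter (fun b =>
        (univ.filter (fun k => b k = true)).card = m ∧
        τ < univ.sup' Finset.univ_nonempty (fun i : X =>
          |((univ.filter (fun k => z k = i)).card : ℝ) / n -
            ((univ.filter (fun k => b k = true ∧ z k = i)).card : ℝ) / m|))).card : ℕ) : ℝ)
      ≤ (((univ : Finset X).biUnion F).card : ℝ) := by exact_mod_cast Finset.card_le_card hsub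
    _ ≤ ∑ i : X, ((F i).card : ℝ) := by exact_mod_cast Finset.card_biUnion_le
    _ ≤ ∑ _i : X, 2 * (n.choose m : ℝ) * Real.exp (-2 * m * τ ^ 2) :=
        Finset.sum_le_sum (fun i _ => hcount i)
    _ = 2 * (Fintype.card X : ℝ) * (n.choose m : ℝ) * Real.exp (-2 * m * τ ^ 2) := by
        rw [Finset.sum_const, nsmul_eq_mul, Finset.card_univ]
        ring

/-- **Sampling without replacement.** Let `Z` be a random sequence in a finite alphabet `X`
and `B` a random binary sequence, independent of `Z`, uniformly distributed over the
binary sequences of length `n` with exactly `m` ones.  Then for any `τ > 0` the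
probability that the empirical distribution of `Z` and that of the sample `Z↓B`
(the subsequence of `Z` at the positions of the ones of `B`) differ by more than `τ`
in sup norm is at most `2|X| exp(−2mτ²)`. -/
theorem sampling_without_replacement
    {Ω : Type*} [MeasurableSpace Ω] (μ : Measure Ω) [IsProbabilityMeasure μ]
    {X : Type*} [Fintype X] [Nonempty X] [DecidableEq X]
    [MeasurableSpace X] [MeasurableSingletonClass X]
    {n m : ℕ} (hm : 1 ≤ m) (hmn : m ≤ n)
    (Z : Ω → Fin n → X) (B : Ω → Fin n → Bool)
    (hZ : Measurable Z) (hB : Measurable B)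
    (hindep : IndepFun Z B μ)
    (hunif : ∀ b : Fin n → Bool,
      (Finset.univ.filter (fun k => b k = true)).card = m →
        μ {ω | B ω = b} = ((n.choose m : ℝ≥0∞))⁻¹)
    (hsupp : μ {ω | (Finset.univ.filter (fun k => B ω k = true)).card = m} = 1)
    (τ : ℝ) (hτ : 0 < τ) :
    μ {ω | (Finset.univ.sup' Finset.univ_nonempty fun i : X =>
        |((Finset.univ.filter (fun k => Z ω k = i)).card : ℝ) / n -
          ((Finset.univ.filter (fun k => B ω k = true ∧ Z ω k = i)).card : ℝ) / m|) > τ}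
      ≤ ENNReal.ofReal (2 * (Fintype.card X : ℝ) * Real.exp (-2 * m * τ ^ 2)) := by
  classical
  set bound := ENNReal.ofReal (2 * (Fintype.card X : ℝ) * Real.exp (-2 * m * τ ^ 2)) with hbound_def
  set E := {ω | (Finset.univ.sup' Finset.univ_nonempty fun i : X =>
        |((Finset.univ.filter (fun k => Z ω k = i)).card : ℝ) / n -
          ((Finset.univ.filter (fun k => B ω k = true ∧ Z ω k = i)).card : ℝ) / m|) > τ}
    with hE_def
  set Cset := {ω | (Finset.univ.filter (fun k => B ω k = true)).card = m} with hC_def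
  have hCmeas : MeasurableSet Cset := by
    have : Cset = B ⁻¹' {b : Fin n → Bool | (Finset.univ.filter (fun k => b k = true)).card = m} := rfl
    rw [this]
    exact hB (MeasurableSet.of_discrete)
  have hCc : μ Csetᶜ = 0 := by
    rw [measure_compl hCmeas (measure_ne_top μ _), hsupp]
    simp
  -- the bad finsets of b for a given z
  set BadB : (Fin n → X) → Finset (Fin n → Bool) := fun z =>
    (univ : Finset (Fin n → Bool)).filter (fun b =>
        (univ.filter (fun k => b k = true)).card = m ∧
        τ < univ.sup' Finset.univ_nonempty (fun i : X =>
          |((univ.filter (fun k => z k = i)).card : ℝ) / n -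
            ((univ.filter (fun k => b k = true ∧ z k = i)).card : ℝ) / m|)) with hBadB_def
  -- covering
  have hcover : E ∩ Cset ⊆ ⋃ z ∈ (univ : Finset (Fin n → X)), ⋃ b ∈ BadB (z : Fin n → X),
      (Z ⁻¹' {z} ∩ B ⁻¹' {b}) := by
    rintro ω ⟨hωE, hωC⟩
    simp only [Set.mem_iUnion]
    refine ⟨Z ω, Finset.mem_univ _, B ω, ?_, ?_⟩
    · rw [hBadB_def, Finset.mem_filter]
      exact ⟨Finset.mem_univ _, hωC, hωE⟩
    · exact ⟨rfl, rfl⟩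
  have hsplit : μ E ≤ μ (E ∩ Cset) + μ Csetᶜ := by
    calc μ E ≤ μ ((E ∩ Cset) ∪ Csetᶜ) := by
          apply measure_mono
          intro ω hω
          by_cases h : ω ∈ Cset
          · exact Or.inl ⟨hω, h⟩
          · exact Or.inr h
      _ ≤ μ (E ∩ Cset) + μ Csetᶜ := measure_union_le _ _
  -- key quantitative bound
  have hkey : ∀ z : Fin n → X, ((BadB z).card : ℝ≥0∞) * ((n.choose m : ℝ≥0∞))⁻¹ ≤ bound := by
    intro z
    have hreal : (((BadB z).card : ℕ) : ℝ)
        ≤ 2 * (Fintype.card X : ℝ) * (n.choose m : ℝ) * Real.exp (-2 * m * τ ^ 2) :=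
      count_bad_b hm hmn z hτ
    have hcpos : 0 < n.choose m := Nat.choose_pos hmn
    have hc0 : ((n.choose m : ℝ≥0∞)) ≠ 0 := by exact_mod_cast Nat.pos_iff_ne_zero.mp hcpos
    have hctop : ((n.choose m : ℝ≥0∞)) ≠ ⊤ := ENNReal.natCast_ne_top _
    rw [← div_eq_mul_inv, ENNReal.div_le_iff hc0 hctop]
    have h1 : ((BadB z).card : ℝ≥0∞) = ENNReal.ofReal (((BadB z).card : ℕ) : ℝ) := by
      rw [ENNReal.ofReal_natCast]
    have h2 : bound * (n.choose m : ℝ≥0∞)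
        = ENNReal.ofReal ((2 * (Fintype.card X : ℝ) * Real.exp (-2 * m * τ ^ 2)) * (n.choose m : ℝ)) := by
      rw [hbound_def, ← ENNReal.ofReal_natCast (n.choose m),
        ← ENNReal.ofReal_mul (by positivity)]
    rw [h1, h2]
    apply ENNReal.ofReal_le_ofReal
    calc (((BadB z).card : ℕ) : ℝ)
        ≤ 2 * (Fintype.card X : ℝ) * (n.choose m : ℝ) * Real.exp (-2 * m * τ ^ 2) := hreal
      _ = (2 * (Fintype.card X : ℝ) * Real.exp (-2 * m * τ ^ 2)) * (n.choose m : ℝ) := by ring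
  -- sum it all up
  have hsum : μ (E ∩ Cset) ≤ bound := by
    calc μ (E ∩ Cset)
        ≤ μ (⋃ z ∈ (univ : Finset (Fin n → X)), ⋃ b ∈ BadB z, (Z ⁻¹' {z} ∩ B ⁻¹' {b})) :=
          measure_mono hcover
      _ ≤ ∑ z ∈ (univ : Finset (Fin n → X)), μ (⋃ b ∈ BadB z, (Z ⁻¹' {z} ∩ B ⁻¹' {b})) :=
          measure_biUnion_finset_le _ _
      _ ≤ ∑ z ∈ (univ : Finset (Fin n → X)), ∑ b ∈ BadB z, μ (Z ⁻¹' {z} ∩ B ⁻¹' {b}) :=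
          Finset.sum_le_sum (fun z _ => measure_biUnion_finset_le _ _)
      _ = ∑ z ∈ (univ : Finset (Fin n → X)), ∑ b ∈ BadB z,
            μ (Z ⁻¹' {z}) * ((n.choose m : ℝ≥0∞))⁻¹ := by
          apply Finset.sum_congr rfl
          intro z _
          apply Finset.sum_congr rfl
          intro b hb
          rw [hBadB_def, Finset.mem_filter] at hb
          obtain ⟨-, hbcard, -⟩ := hb
          rw [hindep.measure_inter_preimage_eq_mul _ _ (measurableSet_singleton z)
            (measurableSet_singleton b)]
          congr 1
          have : B ⁻¹' {b} = {ω | B ω = b} := rfl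
          rw [this, hunif b hbcard]
      _ = ∑ z ∈ (univ : Finset (Fin n → X)),
            μ (Z ⁻¹' {z}) * (((BadB z).card : ℝ≥0∞) * ((n.choose m : ℝ≥0∞))⁻¹) := by
          apply Finset.sum_congr rfl
          intro z _
          rw [Finset.sum_const, nsmul_eq_mul]
          ring
      _ ≤ ∑ z ∈ (univ : Finset (Fin n → X)), μ (Z ⁻¹' {z}) * bound :=
          Finset.sum_le_sum (fun z _ => mul_le_mul_right (hkey z) _)
      _ = (∑ z ∈ (univ : Finset (Fin n → X)), μ (Z ⁻¹' {z})) * bound := by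
          rw [Finset.sum_mul]
      _ = 1 * bound := by
          congr 1
          rw [sum_measure_preimage_singleton _ (fun z _ => hZ (measurableSet_singleton z))]
          rw [Finset.coe_univ, Set.preimage_univ, measure_univ]
      _ = bound := one_mul _
  calc μ E ≤ μ (E ∩ Cset) + μ Csetᶜ := hsplit
    _ = μ (E ∩ Cset) := by rw [hCc, add_zero]
    _ ≤ bound := hsum
end

section
/- Let Z^n take values in a finite alphabet X and let B^n be a {0,1}-valued sequence such that B_{k+1} ~ Bernoulli(q) and B_{k+1} is independent of (B^k, Z^{k+1}) for every k < n. Define α(B^n) = n₁(B^n)/(nq), where n₁(B^n) is the number of ones in B^n. Then for any τ > 0, P( ‖p_emp(Z^n) − α(B^n) · p_emp(Z^n↓B^n)‖_∞ > τ ) ≤ 2|X| exp(−n τ² q² / 2). -/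
open MeasureTheory ProbabilityTheory Finset
open scoped ENNReal

/-- Chord bound for exp on `[-c, c]`. -/
lemma cis_exp_chord (t c y : ℝ) (hc : 0 < c) (hy : |y| ≤ c) :
    Real.exp (t * y) ≤ (c + y) / (2 * c) * Real.exp (t * c)
      + (c - y) / (2 * c) * Real.exp (-(t * c)) := by
  have hy1 : -c ≤ y := (abs_le.1 hy).1
  have hy2 : y ≤ c := (abs_le.1 hy).2
  have ha : (0:ℝ) ≤ (c + y) / (2 * c) := by
    apply div_nonneg <;> linarith
  have hb : (0:ℝ) ≤ (c - y) / (2 * c) := by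
    apply div_nonneg <;> linarith
  have hab : (c + y) / (2 * c) + (c - y) / (2 * c) = 1 := by
    field_simp; ring
  have := convexOn_exp.2 (Set.mem_univ (t * c)) (Set.mem_univ (-(t * c))) ha hb hab
  simp only [smul_eq_mul] at this
  have hx : (c + y) / (2 * c) * (t * c) + (c - y) / (2 * c) * -(t * c) = t * y := by
    field_simp; ring
  rwa [hx] at this

/-- Bernoulli mgf bound via cosh. -/
lemma cis_bern_bound (q t s : ℝ) (hq0 : 0 < q) (hq1 : q ≤ 1) (hs : s = 1 ∨ s = -1) :
    q * Real.exp (t * (s * (1 - 1 / q))) + (1 - q) * Real.exp (t * s)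
      ≤ Real.exp (t ^ 2 / (2 * q ^ 2)) := by
  have hc : (0:ℝ) < 1 / q := by positivity
  have h1q : (1:ℝ) ≤ 1 / q := by rw [le_div_iff₀ hq0]; linarith
  have hy1 : |s * (1 - 1 / q)| ≤ 1 / q := by
    rcases hs with rfl | rfl <;>
      rw [abs_le] <;> constructor <;> nlinarith
  have hy2 : |s| ≤ 1 / q := by
    rcases hs with rfl | rfl <;> simpa using h1q
  have h1 := cis_exp_chord t (1 / q) (s * (1 - 1 / q)) hc hy1
  have h2 := cis_exp_chord t (1 / q) s hc hy2
  have key : q * Real.exp (t * (s * (1 - 1 / q))) + (1 - q) * Real.exp (t * s)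
      ≤ (Real.exp (t * (1 / q)) + Real.exp (-(t * (1 / q)))) / 2 := by
    have e1 := mul_le_mul_of_nonneg_left h1 hq0.le
    have e2 := mul_le_mul_of_nonneg_left h2 (by linarith : (0:ℝ) ≤ 1 - q)
    have := add_le_add e1 e2
    refine this.trans (le_of_eq ?_)
    rcases hs with rfl | rfl <;> field_simp <;> ring
  refine key.trans ?_
  have : (Real.exp (t * (1 / q)) + Real.exp (-(t * (1 / q)))) / 2 = Real.cosh (t * (1 / q)) := by
    rw [Real.cosh_eq]
  rw [this]
  have he : (t * (1 / q)) ^ 2 / 2 = t ^ 2 / (2 * q ^ 2) := by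
    ring
  rw [← he]
  exact Real.cosh_le_exp_half_sq _

/-- Bounded measurable functions are integrable on a probability space. -/
lemma cis_integrable_of_bound {Ω : Type*} [MeasurableSpace Ω] (μ : Measure Ω)
    [IsProbabilityMeasure μ] {f : Ω → ℝ} (hf : Measurable f) (C : ℝ)
    (hC : ∀ ω, |f ω| ≤ C) : Integrable f μ :=
  (integrable_const C).mono' hf.aestronglyMeasurable (ae_of_all _ fun ω => hC ω)

theorem cis_mgf_aux {Ω : Type*} [MeasurableSpace Ω] (μ : Measure Ω) [IsProbabilityMeasure μ]
    {X : Type*} [Fintype X] [DecidableEq X]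
    [MeasurableSpace X] [MeasurableSingletonClass X]
    {n : ℕ} (q : ℝ) (hq0 : 0 < q) (hq1 : q ≤ 1)
    (Z : Ω → Fin n → X) (B : Ω → Fin n → Bool)
    (hZ : Measurable Z) (hB : Measurable B)
    (hber : ∀ k : Fin n, μ {ω | B ω k = true} = ENNReal.ofReal q)
    (hindep : ∀ k : Fin n,
      IndepFun (fun ω => B ω k)
        (fun ω => ((fun j : Fin n => if j < k then B ω j else false),
                   (fun j : Fin n => if j ≤ k then Z ω j else Z ω k))) μ)
    (i : X) (s : ℝ) (hs : s = 1 ∨ s = -1) (t : ℝ) (m : ℕ) :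
    ∫ ω, Real.exp (t * ∑ k ∈ Finset.univ.filter (fun k : Fin n => (k : ℕ) < m),
        s * ((if Z ω k = i then (1:ℝ) else 0) * (1 - (if B ω k = true then 1/q else 0)))) ∂μ
      ≤ Real.exp (m * (t ^ 2 / (2 * q ^ 2))) := by
  -- basic facts
  have h1q : (1:ℝ) ≤ 1 / q := by rw [le_div_iff₀ hq0]; linarith
  have hs1 : |s| = 1 := by rcases hs with rfl | rfl <;> simp
  set D : Fin n → Ω → ℝ := fun k ω =>
    s * ((if Z ω k = i then (1:ℝ) else 0) * (1 - (if B ω k = true then 1/q else 0))) with hD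
  have hDmeas : ∀ k, Measurable (D k) := by
    intro k
    apply Measurable.const_mul
    apply Measurable.mul
    · exact Measurable.ite (((measurable_pi_apply k).comp hZ) (measurableSet_singleton i))
        measurable_const measurable_const
    · apply Measurable.const_sub
      exact Measurable.ite (((measurable_pi_apply k).comp hB) (measurableSet_singleton true))
        measurable_const measurable_const
  have hDbound : ∀ k ω, |D k ω| ≤ 1 / q := by
    intro k ω
    rw [hD]
    simp only []
    rw [abs_mul, hs1, one_mul, abs_mul]
    split_ifs with h1 h2 h2
    · rw [abs_one, one_mul, abs_of_nonpos (by linarith), neg_sub]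
      linarith
    · rw [abs_one, one_mul, sub_zero, abs_one]; exact h1q
    · simp; positivity
    · simp; positivity
  -- the partial sums
  set S : ℕ → Ω → ℝ := fun m ω =>
    ∑ k ∈ Finset.univ.filter (fun k : Fin n => (k : ℕ) < m), D k ω with hS
  have hSmeas : ∀ m, Measurable (S m) := fun m =>
    Finset.measurable_sum _ fun k _ => hDmeas k
  have hSbound : ∀ m ω, |S m ω| ≤ n * (1 / q) := by
    intro m ω
    refine (Finset.abs_sum_le_sum_abs _ _).trans ?_
    refine (Finset.sum_le_sum fun k _ => hDbound k ω).trans ?_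
    rw [Finset.sum_const, nsmul_eq_mul]
    have : ((Finset.univ.filter (fun k : Fin n => (k : ℕ) < m)).card : ℝ) ≤ n := by
      have := Finset.card_filter_le (Finset.univ : Finset (Fin n))
        (fun k : Fin n => (k : ℕ) < m)
      simp only [Finset.card_univ, Fintype.card_fin] at this
      exact_mod_cast this
    have hq' : (0:ℝ) ≤ 1 / q := by positivity
    nlinarith
  have hexpint : ∀ m, Integrable (fun ω => Real.exp (t * S m ω)) μ := by
    intro m
    refine cis_integrable_of_bound μ ((hSmeas m).const_mul t).exp (Real.exp (|t| * (n * (1/q)))) ?_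
    intro ω
    rw [abs_of_pos (Real.exp_pos _)]
    apply Real.exp_le_exp.2
    calc t * S m ω ≤ |t * S m ω| := le_abs_self _
      _ = |t| * |S m ω| := abs_mul _ _
      _ ≤ |t| * (n * (1/q)) := by
          exact mul_le_mul_of_nonneg_left (hSbound m ω) (abs_nonneg t)
  -- main induction
  induction m with
  | zero =>
    simp only [Nat.not_lt_zero, Finset.filter_false, Finset.sum_empty, mul_zero, Real.exp_zero,
      Nat.cast_zero, zero_mul, hS]
    simp [integral_const, measure_univ]
  | succ m ih =>
    have hM1 : (1:ℝ) ≤ Real.exp (t ^ 2 / (2 * q ^ 2)) := by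
      rw [← Real.exp_zero]; apply Real.exp_le_exp.2; positivity
    by_cases hm : m < n
    · -- main step: split off coordinate k₀ = m
      set k₀ : Fin n := ⟨m, hm⟩ with hk₀def
      have hfil : Finset.univ.filter (fun k : Fin n => (k : ℕ) < m + 1)
          = insert k₀ (Finset.univ.filter (fun k : Fin n => (k : ℕ) < m)) := by
        ext k
        simp only [Finset.mem_filter, Finset.mem_univ, true_and, Finset.mem_insert, Fin.ext_iff,
          hk₀def]
        omega
      have hnot : k₀ ∉ Finset.univ.filter (fun k : Fin n => (k : ℕ) < m) := by
        simp [hk₀def]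
      set χ : Ω → ℝ := fun ω => if Z ω k₀ = i then (1:ℝ) else 0 with hχ
      set g : Bool → ℝ := fun b => Real.exp (t * (s * (1 - (if b then 1/q else 0)))) with hg
      have hχmeas : Measurable χ :=
        Measurable.ite (((measurable_pi_apply k₀).comp hZ) (measurableSet_singleton i))
          measurable_const measurable_const
      have hχ01 : ∀ ω, χ ω = 0 ∨ χ ω = 1 := fun ω => by
        rw [hχ]; dsimp only; split_ifs <;> simp
      have hpt : ∀ ω, Real.exp (t * S (m+1) ω)
          = Real.exp (t * S m ω) * (1 - χ ω)
            + (Real.exp (t * S m ω) * χ ω) * g (B ω k₀) := by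
        intro ω
        have hsum : S (m+1) ω = D k₀ ω + S m ω := by
          rw [hS]; dsimp only; rw [hfil, Finset.sum_insert hnot]
        rw [hsum]
        by_cases hzi : Z ω k₀ = i
        · have hχ1 : χ ω = 1 := by rw [hχ]; dsimp only; rw [if_pos hzi]
          have hd : D k₀ ω = s * (1 - (if B ω k₀ = true then 1/q else 0)) := by
            rw [hD]; dsimp only; rw [if_pos hzi, one_mul]
          rw [hχ1, hd, hg]
          dsimp only
          rw [sub_self, mul_zero, zero_add, mul_one, ← Real.exp_add]
          congr 1
          ring
        · have hχ0 : χ ω = 0 := by rw [hχ]; dsimp only; rw [if_neg hzi]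
          have hd : D k₀ ω = 0 := by
            rw [hD]; dsimp only; rw [if_neg hzi]; ring
          rw [hχ0, hd, zero_add, sub_zero, mul_one, mul_zero, zero_mul, add_zero]
      -- boundedness and integrability
      set Cf : ℝ := Real.exp (|t| * (n * (1/q))) with hCf
      have hfb : ∀ ω, |Real.exp (t * S m ω)| ≤ Cf := by
        intro ω
        rw [abs_of_pos (Real.exp_pos _), hCf]
        apply Real.exp_le_exp.2
        calc t * S m ω ≤ |t * S m ω| := le_abs_self _
          _ = |t| * |S m ω| := abs_mul _ _
          _ ≤ |t| * (n * (1/q)) := mul_le_mul_of_nonneg_left (hSbound m ω) (abs_nonneg t)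
      have hχb : ∀ ω, |χ ω| ≤ 1 := fun ω => by
        rcases hχ01 ω with h | h <;> rw [h] <;> norm_num
      have hfmeas : Measurable (fun ω => Real.exp (t * S m ω)) := ((hSmeas m).const_mul t).exp
      have hint1 : Integrable (fun ω => Real.exp (t * S m ω) * (1 - χ ω)) μ := by
        refine cis_integrable_of_bound μ (hfmeas.mul (measurable_const.sub hχmeas)) (Cf * 2) ?_
        intro ω
        rw [abs_mul]
        have h1 : |1 - χ ω| ≤ 2 := by rcases hχ01 ω with h | h <;> rw [h] <;> norm_num
        have := hfb ω
        have h0 : (0:ℝ) ≤ |Real.exp (t * S m ω)| := abs_nonneg _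
        nlinarith
      have hint2 : Integrable (fun ω => Real.exp (t * S m ω) * χ ω) μ := by
        refine cis_integrable_of_bound μ (hfmeas.mul hχmeas) Cf ?_
        intro ω
        rw [abs_mul]
        have := hfb ω
        have := hχb ω
        have h0 : (0:ℝ) ≤ |Real.exp (t * S m ω)| := abs_nonneg _
        nlinarith
      have hgb : ∀ b, |g b| ≤ Real.exp (|t| * (1/q)) := by
        intro b
        rw [hg]; dsimp only
        rw [abs_of_pos (Real.exp_pos _)]
        apply Real.exp_le_exp.2
        have hyb : |s * (1 - (if b then 1/q else 0))| ≤ 1/q := by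
          rw [abs_mul, hs1, one_mul]
          cases b
          · simp only [Bool.false_eq_true, if_false, sub_zero, abs_one]; exact h1q
          · simp only [if_true]
            rw [abs_of_nonpos (by linarith)]
            linarith
        calc t * (s * (1 - (if b then 1/q else 0)))
            ≤ |t * (s * (1 - (if b then 1/q else 0)))| := le_abs_self _
          _ = |t| * |s * (1 - (if b then 1/q else 0))| := abs_mul _ _
          _ ≤ |t| * (1/q) := mul_le_mul_of_nonneg_left hyb (abs_nonneg t)
      have hgBmeas : Measurable (fun ω => g (B ω k₀)) :=
        (measurable_of_countable g).comp ((measurable_pi_apply k₀).comp hB)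
      have hint3 : Integrable (fun ω => g (B ω k₀)) μ :=
        cis_integrable_of_bound μ hgBmeas _ fun ω => hgb (B ω k₀)
      have hint4 : Integrable (fun ω => (Real.exp (t * S m ω) * χ ω) * g (B ω k₀)) μ := by
        refine cis_integrable_of_bound μ ((hfmeas.mul hχmeas).mul hgBmeas)
          (Cf * Real.exp (|t| * (1/q))) ?_
        intro ω
        rw [abs_mul, abs_mul]
        have h1 := hfb ω
        have h2 := hχb ω
        have h3 := hgb (B ω k₀)
        have h0 : (0:ℝ) ≤ |Real.exp (t * S m ω)| := abs_nonneg _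
        have h4 : (0:ℝ) ≤ |χ ω| := abs_nonneg _
        have h5 : (0:ℝ) ≤ |g (B ω k₀)| := abs_nonneg _
        have h6 : (0:ℝ) ≤ Cf := le_trans h0 h1
        have h7 : |Real.exp (t * S m ω)| * |χ ω| ≤ Cf := by nlinarith
        exact mul_le_mul h7 h3 h5 h6
      -- independence factorization
      set W : Ω → (Fin n → Bool) × (Fin n → X) := fun ω =>
        ((fun j : Fin n => if j < k₀ then B ω j else false),
         (fun j : Fin n => if j ≤ k₀ then Z ω j else Z ω k₀)) with hW
      set ψ : (Fin n → Bool) × (Fin n → X) → ℝ := fun p =>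
        Real.exp (t * ∑ k ∈ Finset.univ.filter (fun k : Fin n => (k : ℕ) < m),
            s * ((if p.2 k = i then (1:ℝ) else 0) * (1 - (if p.1 k then 1/q else 0))))
          * (if p.2 k₀ = i then (1:ℝ) else 0) with hψ
      have hψmeas : Measurable ψ := by
        apply Measurable.mul
        · apply Measurable.exp
          apply Measurable.const_mul
          apply Finset.measurable_sum
          intro k _
          apply Measurable.const_mul
          apply Measurable.mul
          · have hmk : Measurable fun p : (Fin n → Bool) × (Fin n → X) => p.2 k :=
              measurable_snd.eval
            exact Measurable.ite (hmk (measurableSet_singleton i))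
              measurable_const measurable_const
          · have hmk : Measurable fun p : (Fin n → Bool) × (Fin n → X) => p.1 k :=
              measurable_fst.eval
            exact Measurable.const_sub (Measurable.ite (hmk (measurableSet_singleton true))
              measurable_const measurable_const) _
        · have hmk : Measurable fun p : (Fin n → Bool) × (Fin n → X) => p.2 k₀ :=
            measurable_snd.eval
          exact Measurable.ite (hmk (measurableSet_singleton i))
            measurable_const measurable_const
      have hψW : (fun ω => ψ (W ω)) = fun ω => Real.exp (t * S m ω) * χ ω := by
        funext ω
        rw [hψ, hW, hχ, hS]
        dsimp only
        have h2 : (if (if k₀ ≤ k₀ then Z ω k₀ else Z ω k₀) = i then (1:ℝ) else 0)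
            = (if Z ω k₀ = i then (1:ℝ) else 0) := by rw [if_pos (le_refl k₀)]
        rw [h2]
        congr 2
        congr 1
        apply Finset.sum_congr rfl
        intro k hk
        have hkm : (k:ℕ) < m := (Finset.mem_filter.1 hk).2
        have hklt : k < k₀ := by rw [Fin.lt_def]; exact hkm
        simp only [if_pos hklt, if_pos hklt.le, hD]
      have hIndep : IndepFun (fun ω => ψ (W ω)) (fun ω => g (B ω k₀)) μ :=
        ((hindep k₀).comp (measurable_of_countable g) hψmeas).symm
      have hmul : ∫ ω, (Real.exp (t * S m ω) * χ ω) * g (B ω k₀) ∂μ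
          = (∫ ω, Real.exp (t * S m ω) * χ ω ∂μ) * ∫ ω, g (B ω k₀) ∂μ := by
        have h := hIndep.integral_mul_eq_mul_integral (by rw [hψW]; exact hint2.aestronglyMeasurable) hint3.aestronglyMeasurable
        rw [hψW] at h
        simpa [Pi.mul_apply] using h
      -- the value of ∫ g(B k₀)
      have hmeasset : MeasurableSet {ω | B ω k₀ = true} :=
        ((measurable_pi_apply k₀).comp hB) (measurableSet_singleton true)
      have hgint : ∫ ω, g (B ω k₀) ∂μ = q * g true + (1 - q) * g false := by
        have hrepr : (fun ω => g (B ω k₀))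
            = fun ω => g false + ({ω' | B ω' k₀ = true}.indicator
                (fun _ => g true - g false) ω) := by
          funext ω
          by_cases hb : B ω k₀ = true
          · rw [hb, Set.indicator_apply,
              if_pos (show ω ∈ {ω' | B ω' k₀ = true} from hb)]
            ring
          · have hbf : B ω k₀ = false := by simpa using hb
            rw [hbf, Set.indicator_apply,
              if_neg (show ω ∉ {ω' | B ω' k₀ = true} from hb)]
            ring
        rw [hrepr, integral_add (integrable_const _)
          ((integrable_const (g true - g false)).indicator hmeasset),
          integral_const, integral_indicator_const _ hmeasset, measureReal_def, measureReal_def, hber k₀,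
          ENNReal.toReal_ofReal hq0.le]
        simp only [measure_univ, ENNReal.toReal_one, smul_eq_mul, one_mul]
        ring
      have hgbound : ∫ ω, g (B ω k₀) ∂μ ≤ Real.exp (t ^ 2 / (2 * q ^ 2)) := by
        rw [hgint, hg]
        have := cis_bern_bound q t s hq0 hq1 hs
        simpa using this
      have hI2nonneg : (0:ℝ) ≤ ∫ ω, Real.exp (t * S m ω) * χ ω ∂μ := by
        apply integral_nonneg
        intro ω
        exact mul_nonneg (Real.exp_pos _).le
          (by rcases hχ01 ω with h | h <;> rw [h] <;> norm_num)
      have hI1nonneg : (0:ℝ) ≤ ∫ ω, Real.exp (t * S m ω) * (1 - χ ω) ∂μ := by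
        apply integral_nonneg
        intro ω
        exact mul_nonneg (Real.exp_pos _).le
          (by rcases hχ01 ω with h | h <;> rw [h] <;> norm_num)
      calc ∫ ω, Real.exp (t * S (m+1) ω) ∂μ
          = ∫ ω, (Real.exp (t * S m ω) * (1 - χ ω)
              + (Real.exp (t * S m ω) * χ ω) * g (B ω k₀)) ∂μ :=
            integral_congr_ae (ae_of_all _ hpt)
        _ = (∫ ω, Real.exp (t * S m ω) * (1 - χ ω) ∂μ)
              + ∫ ω, (Real.exp (t * S m ω) * χ ω) * g (B ω k₀) ∂μ :=
            integral_add hint1 hint4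
        _ = (∫ ω, Real.exp (t * S m ω) * (1 - χ ω) ∂μ)
              + (∫ ω, Real.exp (t * S m ω) * χ ω ∂μ) * ∫ ω, g (B ω k₀) ∂μ := by rw [hmul]
        _ ≤ Real.exp (t ^ 2 / (2 * q ^ 2))
              * ((∫ ω, Real.exp (t * S m ω) * (1 - χ ω) ∂μ)
                + ∫ ω, Real.exp (t * S m ω) * χ ω ∂μ) := by
            have h := mul_le_mul_of_nonneg_left hgbound hI2nonneg
            nlinarith [hM1, hI1nonneg, hI2nonneg]
        _ = Real.exp (t ^ 2 / (2 * q ^ 2)) * ∫ ω, Real.exp (t * S m ω) ∂μ := by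
            rw [← integral_add hint1 hint2]
            congr 1
            apply integral_congr_ae (ae_of_all _ ?_)
            intro ω
            ring
        _ ≤ Real.exp (t ^ 2 / (2 * q ^ 2)) * Real.exp (m * (t ^ 2 / (2 * q ^ 2))) :=
            mul_le_mul_of_nonneg_left ih (Real.exp_pos _).le
        _ = Real.exp ((m + 1 : ℕ) * (t ^ 2 / (2 * q ^ 2))) := by
            rw [← Real.exp_add]
            congr 1
            push_cast
            ring
    · -- m ≥ n : the filter does not change
      have hfil : Finset.univ.filter (fun k : Fin n => (k : ℕ) < m + 1)
          = Finset.univ.filter (fun k : Fin n => (k : ℕ) < m) := by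
        ext k; simp only [Finset.mem_filter, Finset.mem_univ, true_and]
        have := k.isLt; omega
      calc ∫ ω, Real.exp (t * S (m+1) ω) ∂μ = ∫ ω, Real.exp (t * S m ω) ∂μ := by
            simp only [hS, hfil]
        _ ≤ Real.exp (m * (t ^ 2 / (2 * q ^ 2))) := ih
        _ ≤ Real.exp ((m + 1 : ℕ) * (t ^ 2 / (2 * q ^ 2))) := by
            apply Real.exp_le_exp.2
            have hcge : (0:ℝ) ≤ t ^ 2 / (2 * q ^ 2) := by positivity
            push_cast
            nlinarith [hcge]

/-- **Causally independent sampling.** Let `Z` take values in a finite alphabet `X` and let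
`B` be a `{0,1}`-valued sequence with `B_{k} ~ Ber(q)`, each `B_k` independent of
`(B^{<k}, Z^{≤k})`.  With the α-normalized sample empirical distribution
`i ↦ #{k : B_k = 1 ∧ Z_k = i} / (nq)`, for any `τ > 0`,
`P(‖p_emp(Zⁿ) − α(Bⁿ)·p_emp(Zⁿ↓Bⁿ)‖_∞ > τ) ≤ 2|X| exp(−nτ²q²/2)`. -/
theorem causally_independent_sampling
    {Ω : Type*} [MeasurableSpace Ω] (μ : Measure Ω) [IsProbabilityMeasure μ]
    {X : Type*} [Fintype X] [Nonempty X] [DecidableEq X]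
    [MeasurableSpace X] [MeasurableSingletonClass X]
    {n : ℕ} (q : ℝ) (hq0 : 0 < q) (hq1 : q ≤ 1)
    (Z : Ω → Fin n → X) (B : Ω → Fin n → Bool)
    (hZ : Measurable Z) (hB : Measurable B)
    (hber : ∀ k : Fin n, μ {ω | B ω k = true} = ENNReal.ofReal q)
    (hindep : ∀ k : Fin n,
      IndepFun (fun ω => B ω k)
        (fun ω => ((fun j : Fin n => if j < k then B ω j else false),
                   (fun j : Fin n => if j ≤ k then Z ω j else Z ω k))) μ)
    (τ : ℝ) (hτ : 0 < τ) :
    μ {ω | (Finset.univ.sup' Finset.univ_nonempty fun i : X =>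
        |((Finset.univ.filter (fun k => Z ω k = i)).card : ℝ) / n -
          ((Finset.univ.filter (fun k => B ω k = true ∧ Z ω k = i)).card : ℝ) / (n * q)|) > τ}
      ≤ ENNReal.ofReal (2 * (Fintype.card X : ℝ) * Real.exp (-(n * τ ^ 2 * q ^ 2) / 2)) := by
  rcases Nat.eq_zero_or_pos n with hn | hn
  · subst hn
    have hempty : {ω | (Finset.univ.sup' Finset.univ_nonempty fun i : X =>
        |((Finset.univ.filter (fun k => Z ω k = i)).card : ℝ) / (0:ℕ) -
          ((Finset.univ.filter (fun k => B ω k = true ∧ Z ω k = i)).card : ℝ) / ((0:ℕ) * q)|)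
        > τ} = ∅ := by
      ext ω
      simp only [Set.mem_setOf_eq, Set.mem_empty_iff_false, iff_false, not_lt]
      apply Finset.sup'_le
      intro i _
      norm_num
      exact hτ.le
    rw [hempty]
    simp only [measure_empty]
    exact zero_le
  · have hn' : (0:ℝ) < n := by exact_mod_cast hn
    set t : ℝ := τ * q ^ 2 with ht_def
    have ht : 0 ≤ t := by positivity
    set e : ℝ := Real.exp (-(n * τ ^ 2 * q ^ 2) / 2) with he_def
    have he0 : 0 ≤ e := (Real.exp_pos _).le
    set A : X → ℝ → Set Ω := fun i s => {ω | (n:ℝ) * τ ≤ ∑ k : Fin n,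
      s * ((if Z ω k = i then (1:ℝ) else 0) * (1 - (if B ω k = true then 1/q else 0)))} with hA
    have tail : ∀ (i : X) (s : ℝ), s = 1 ∨ s = -1 → μ (A i s) ≤ ENNReal.ofReal e := by
      intro i s hs
      set T : Ω → ℝ := fun ω => ∑ k : Fin n,
        s * ((if Z ω k = i then (1:ℝ) else 0) * (1 - (if B ω k = true then 1/q else 0))) with hT
      have hTmeas : Measurable T := by
        apply Finset.measurable_sum
        intro k _
        apply Measurable.const_mul
        apply Measurable.mul
        · exact Measurable.ite (((measurable_pi_apply k).comp hZ) (measurableSet_singleton i))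
            measurable_const measurable_const
        · exact Measurable.const_sub (Measurable.ite
            (((measurable_pi_apply k).comp hB) (measurableSet_singleton true))
            measurable_const measurable_const) _
      have hs1 : |s| = 1 := by rcases hs with rfl | rfl <;> simp
      have h1q : (1:ℝ) ≤ 1 / q := by rw [le_div_iff₀ hq0]; linarith
      have hTbound : ∀ ω, |T ω| ≤ n * (1/q) := by
        intro ω
        rw [hT]
        refine (Finset.abs_sum_le_sum_abs _ _).trans ?_
        have hterm : ∀ k : Fin n, |s * ((if Z ω k = i then (1:ℝ) else 0)
            * (1 - (if B ω k = true then 1/q else 0)))| ≤ 1/q := by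
          intro k
          rw [abs_mul, hs1, one_mul, abs_mul]
          split_ifs with h1 h2 h2
          · rw [abs_one, one_mul, abs_of_nonpos (by linarith), neg_sub]
            linarith
          · rw [abs_one, one_mul, sub_zero, abs_one]; exact h1q
          · simp; positivity
          · simp; positivity
        refine (Finset.sum_le_sum fun k _ => hterm k).trans ?_
        rw [Finset.sum_const, nsmul_eq_mul, Finset.card_univ, Fintype.card_fin]
      have hint : Integrable (fun ω => Real.exp (t * T ω)) μ := by
        refine cis_integrable_of_bound μ (hTmeas.const_mul t).exp
          (Real.exp (|t| * (n * (1/q)))) ?_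
        intro ω
        rw [abs_of_pos (Real.exp_pos _)]
        apply Real.exp_le_exp.2
        calc t * T ω ≤ |t * T ω| := le_abs_self _
          _ = |t| * |T ω| := abs_mul _ _
          _ ≤ |t| * (n * (1/q)) := mul_le_mul_of_nonneg_left (hTbound ω) (abs_nonneg t)
      have hmgf : mgf T μ t ≤ Real.exp (n * (t ^ 2 / (2 * q ^ 2))) := by
        have h := cis_mgf_aux μ q hq0 hq1 Z B hZ hB hber hindep i s hs t n
        rw [Finset.filter_true_of_mem (fun k _ => k.isLt)] at h
        exact h
      have hch := measure_ge_le_exp_mul_mgf (X := T) (μ := μ) ((n:ℝ) * τ) ht hint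
      have hto : (μ {ω | (n:ℝ) * τ ≤ T ω}).toReal ≤ e := by
        refine hch.trans ?_
        calc Real.exp (-t * ((n:ℝ) * τ)) * mgf T μ t
            ≤ Real.exp (-t * (n * τ)) * Real.exp (n * (t ^ 2 / (2 * q ^ 2))) :=
              mul_le_mul_of_nonneg_left hmgf (Real.exp_pos _).le
          _ = e := by
              rw [← Real.exp_add, he_def]
              congr 1
              rw [ht_def]
              field_simp
              ring
      calc μ (A i s) = ENNReal.ofReal (μ (A i s)).toReal :=
            (ENNReal.ofReal_toReal (measure_ne_top μ _)).symm
        _ ≤ ENNReal.ofReal e := ENNReal.ofReal_le_ofReal hto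
    have hsub : {ω | (Finset.univ.sup' Finset.univ_nonempty fun i : X =>
        |((Finset.univ.filter (fun k => Z ω k = i)).card : ℝ) / n -
          ((Finset.univ.filter (fun k => B ω k = true ∧ Z ω k = i)).card : ℝ) / (n * q)|) > τ}
        ⊆ ⋃ i ∈ (Finset.univ : Finset X), (A i 1 ∪ A i (-1)) := by
      intro ω hω
      rw [Set.mem_setOf_eq] at hω
      rw [gt_iff_lt, Finset.lt_sup'_iff] at hω
      obtain ⟨i, -, hi⟩ := hω
      have hdecomp : ∀ k : Fin n, (if Z ω k = i then (1:ℝ) else 0)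
          * (1 - (if B ω k = true then 1/q else 0))
          = (if Z ω k = i then (1:ℝ) else 0)
            - (if B ω k = true ∧ Z ω k = i then (1:ℝ) else 0) / q := by
        intro k
        by_cases h1 : Z ω k = i <;> by_cases h2 : B ω k = true <;>
          simp [h1, h2] <;> ring
      have hsum : (∑ k : Fin n, (if Z ω k = i then (1:ℝ) else 0)
            * (1 - (if B ω k = true then 1/q else 0)))
          = ((Finset.univ.filter (fun k => Z ω k = i)).card : ℝ)
            - ((Finset.univ.filter (fun k => B ω k = true ∧ Z ω k = i)).card : ℝ) / q := by
        rw [Finset.sum_congr rfl fun k _ => hdecomp k, Finset.sum_sub_distrib,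
          ← Finset.sum_div, Finset.sum_boole, Finset.sum_boole]
      have hexpr : ((Finset.univ.filter (fun k => Z ω k = i)).card : ℝ) / n -
            ((Finset.univ.filter (fun k => B ω k = true ∧ Z ω k = i)).card : ℝ) / (n * q)
          = (∑ k : Fin n, (if Z ω k = i then (1:ℝ) else 0)
            * (1 - (if B ω k = true then 1/q else 0))) / n := by
        rw [hsum]
        field_simp
      rw [hexpr] at hi
      have habs : (n:ℝ) * τ < |∑ k : Fin n, (if Z ω k = i then (1:ℝ) else 0)
          * (1 - (if B ω k = true then 1/q else 0))| := by
        rw [abs_div, abs_of_pos hn'] at hi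
        have := (lt_div_iff₀ hn').1 hi
        linarith
      refine Set.mem_iUnion₂.2 ⟨i, Finset.mem_univ i, ?_⟩
      rcases lt_abs.1 habs with h | h
      · left
        rw [hA]
        refine Set.mem_setOf_eq ▸ ?_
        simp only [one_mul]
        exact h.le
      · right
        rw [hA]
        refine Set.mem_setOf_eq ▸ ?_
        simp only [neg_one_mul, Finset.sum_neg_distrib]
        exact h.le
    calc μ _ ≤ μ (⋃ i ∈ (Finset.univ : Finset X), (A i 1 ∪ A i (-1))) := measure_mono hsub
      _ ≤ ∑ i ∈ (Finset.univ : Finset X), μ (A i 1 ∪ A i (-1)) :=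
          measure_biUnion_finset_le _ _
      _ ≤ ∑ _i ∈ (Finset.univ : Finset X), (ENNReal.ofReal e + ENNReal.ofReal e) :=
          Finset.sum_le_sum fun i _ => (measure_union_le _ _).trans
            (add_le_add (tail i 1 (Or.inl rfl)) (tail i (-1) (Or.inr rfl)))
      _ = ENNReal.ofReal (2 * (Fintype.card X : ℝ) * e) := by
          rw [Finset.sum_const, Finset.card_univ, ← ENNReal.ofReal_add he0 he0]
          rw [nsmul_eq_mul, ← ENNReal.ofReal_natCast, ← ENNReal.ofReal_mul (by positivity)]
          congr 1
          ring
end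

section
/- Let p and q be probability distributions over a finite alphabet X with p having strictly positive entries, and let β ∈ (0,1] be such that p + β^{−1}(q − p) is a probability distribution with strictly positive entries. Then the derivative with respect to β of R(β) := β·( log|X| − H( p + β^{−1}(q − p) ) ) satisfies dR/dβ ≤ log|X| − H(p) − D(p ‖ q), where D is the Kullback–Leibler divergence (base 2). -/
open Finset

/-- **Derivative bound for the discarding rate function.** Let `p, q` be probability
distributions over a finite alphabet `X`, `p` strictly positive, and `β ∈ (0,1]` with
`p + β⁻¹(q − p)` a strictly positive probability distribution.  Then the derivative at `β`
of `R(β) = β (log₂|X| − H(p + β⁻¹(q − p)))` satisfies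
`R'(β) ≤ log₂|X| − H(p) − D(p‖q)`. -/
theorem rate_derivative_bound {X : Type*} [Fintype X] [Nonempty X]
    (p q : X → ℝ)
    (hp : ∀ x, 0 < p x) (hpsum : ∑ x, p x = 1)
    (hq : ∀ x, 0 ≤ q x) (hqsum : ∑ x, q x = 1)
    (β : ℝ) (hβ0 : 0 < β) (hβ1 : β ≤ 1)
    (hperm : ∀ x, 0 < p x + β⁻¹ * (q x - p x)) :
    deriv (fun b : ℝ => b * (Real.logb 2 (Fintype.card X) -
        (-∑ x, (p x + b⁻¹ * (q x - p x)) * Real.logb 2 (p x + b⁻¹ * (q x - p x))))) β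
      ≤ Real.logb 2 (Fintype.card X) - (-∑ x, p x * Real.logb 2 (p x))
          - ∑ x, p x * Real.logb 2 (p x / q x) := by
  have hL : (0:ℝ) < Real.log 2 := Real.log_pos one_lt_two
  set L := Real.log 2 with hLdef
  set C := Real.logb 2 (Fintype.card X) with hCdef
  set r : X → ℝ := fun x => p x + β⁻¹ * (q x - p x) with hrdef
  have hrpos : ∀ x, 0 < r x := hperm
  have hrsum : ∑ x, r x = 1 := by
    simp only [hrdef, Finset.sum_add_distrib, ← Finset.mul_sum, Finset.sum_sub_distrib,
      hpsum, hqsum]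
    ring
  have hqp : ∀ x, q x - p x = β * (r x - p x) := by
    intro x
    simp only [hrdef]
    field_simp
    ring
  have hqpos : ∀ x, 0 < q x := by
    intro x
    have h1 : q x = β * r x + (1 - β) * p x := by
      have := hqp x; nlinarith
    nlinarith [mul_pos hβ0 (hrpos x), mul_nonneg (by linarith : (0:ℝ) ≤ 1 - β) (hp x).le]
  -- derivative of the inner map b ↦ p x + b⁻¹ (q x - p x)
  have hu : ∀ x, HasDerivAt (fun b : ℝ => p x + b⁻¹ * (q x - p x))
      (-(β ^ 2)⁻¹ * (q x - p x)) β := by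
    intro x
    exact ((hasDerivAt_inv hβ0.ne').mul_const _).const_add _
  have hterm : ∀ x, HasDerivAt
      (fun b : ℝ => (p x + b⁻¹ * (q x - p x)) * Real.logb 2 (p x + b⁻¹ * (q x - p x)))
      ((-(β ^ 2)⁻¹ * (q x - p x)) * (Real.log (r x) / L)
        + r x * ((-(β ^ 2)⁻¹ * (q x - p x)) / r x / L)) β := by
    intro x
    exact (hu x).mul (((hu x).log (hrpos x).ne').div_const L)
  have hS : HasDerivAt
      (fun b : ℝ => ∑ x, (p x + b⁻¹ * (q x - p x)) * Real.logb 2 (p x + b⁻¹ * (q x - p x)))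
      (∑ x, ((-(β ^ 2)⁻¹ * (q x - p x)) * (Real.log (r x) / L)
        + r x * ((-(β ^ 2)⁻¹ * (q x - p x)) / r x / L))) β :=
    HasDerivAt.fun_sum (fun x _ => hterm x)
  have hF : HasDerivAt (fun b : ℝ => b * (C -
      (-∑ x, (p x + b⁻¹ * (q x - p x)) * Real.logb 2 (p x + b⁻¹ * (q x - p x)))))
      (1 * (C - (-∑ x, r x * Real.logb 2 (r x)))
        + β * (-(-(∑ x, ((-(β ^ 2)⁻¹ * (q x - p x)) * (Real.log (r x) / L)
          + r x * ((-(β ^ 2)⁻¹ * (q x - p x)) / r x / L)))))) β :=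
    (hasDerivAt_id β).mul (hS.neg.const_sub C)
  rw [hF.deriv]
  clear_value r
  -- simplify the derivative value
  have hlogb : ∀ t : ℝ, Real.logb 2 t = Real.log t / L := fun t => rfl
  have hDval : 1 * (C - (-∑ x, r x * Real.logb 2 (r x)))
      + β * (-(-(∑ x, ((-(β ^ 2)⁻¹ * (q x - p x)) * (Real.log (r x) / L)
        + r x * ((-(β ^ 2)⁻¹ * (q x - p x)) / r x / L)))))
      = C + ∑ x, p x * (Real.log (r x) / L) := by
    have hper : ∀ x, r x * Real.logb 2 (r x)
        + β * ((-(β ^ 2)⁻¹ * (q x - p x)) * (Real.log (r x) / L)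
          + r x * ((-(β ^ 2)⁻¹ * (q x - p x)) / r x / L))
        = p x * (Real.log (r x) / L) - (r x - p x) / L := by
      intro x
      rw [hlogb, hqp x]
      have h1 : r x ≠ 0 := (hrpos x).ne'
      field_simp
      ring
    have hsum : ∑ x, (r x * Real.logb 2 (r x)
        + β * ((-(β ^ 2)⁻¹ * (q x - p x)) * (Real.log (r x) / L)
          + r x * ((-(β ^ 2)⁻¹ * (q x - p x)) / r x / L)))
        = ∑ x, (p x * (Real.log (r x) / L) - (r x - p x) / L) :=
      Finset.sum_congr rfl (fun x _ => hper x)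
    have h2 : ∑ x, (r x - p x) / L = 0 := by
      rw [← Finset.sum_div, Finset.sum_sub_distrib, hrsum, hpsum]
      simp
    rw [Finset.sum_add_distrib, ← Finset.mul_sum] at hsum
    rw [Finset.sum_sub_distrib] at hsum
    rw [h2] at hsum
    linarith [hsum]
  rw [hDval]
  -- rewrite RHS
  have hRHS : C - (-∑ x, p x * Real.logb 2 (p x)) - ∑ x, p x * Real.logb 2 (p x / q x)
      = C + ∑ x, p x * (Real.log (q x) / L) := by
    have : ∀ x, p x * Real.logb 2 (p x) - p x * Real.logb 2 (p x / q x)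
        = p x * (Real.log (q x) / L) := by
      intro x
      rw [hlogb, hlogb, Real.log_div (hp x).ne' (hqpos x).ne']
      field_simp
      ring
    have e : ∑ x, p x * Real.logb 2 (p x) - ∑ x, p x * Real.logb 2 (p x / q x)
        = ∑ x, p x * (Real.log (q x) / L) := by
      rw [← Finset.sum_sub_distrib]
      exact Finset.sum_congr rfl (fun x _ => this x)
    linarith [e]
  rw [hRHS]
  -- key inequality : ∑ p log r ≤ ∑ p log q
  have gibbs : ∑ x, p x * Real.log (r x) ≤ ∑ x, p x * Real.log (p x) := by
    have h1 : ∀ x ∈ Finset.univ (α := X), p x * Real.log (r x) - p x * Real.log (p x)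
        ≤ r x - p x := by
      intro x _
      have h2 : Real.log (r x / p x) ≤ r x / p x - 1 :=
        Real.log_le_sub_one_of_pos (div_pos (hrpos x) (hp x))
      rw [Real.log_div (hrpos x).ne' (hp x).ne'] at h2
      have h3 := mul_le_mul_of_nonneg_left h2 (hp x).le
      have h4 : p x * (r x / p x) = r x := by
        rw [mul_comm]; exact div_mul_cancel₀ _ (hp x).ne'
      rw [mul_sub] at h3
      nlinarith [h3, h4]
    have := Finset.sum_le_sum h1
    rw [Finset.sum_sub_distrib] at this
    rw [Finset.sum_sub_distrib, hrsum, hpsum] at this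
    linarith
  have conc : ∀ x, β * Real.log (r x) + (1 - β) * Real.log (p x) ≤ Real.log (q x) := by
    intro x
    have h1 := strictConcaveOn_log_Ioi.concaveOn.2 (Set.mem_Ioi.2 (hrpos x))
      (Set.mem_Ioi.2 (hp x)) hβ0.le (by linarith : (0:ℝ) ≤ 1 - β) (by ring)
    simp only [smul_eq_mul] at h1
    have h2 : β * r x + (1 - β) * p x = q x := by
      have := hqp x; nlinarith
    rw [h2] at h1
    exact h1
  have key : ∑ x, p x * Real.log (r x) ≤ ∑ x, p x * Real.log (q x) := by
    have h1 : ∀ x ∈ Finset.univ (α := X),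
        β * (p x * Real.log (r x)) + (1 - β) * (p x * Real.log (p x))
          ≤ p x * Real.log (q x) := by
      intro x _
      have := mul_le_mul_of_nonneg_left (conc x) (hp x).le
      nlinarith [conc x, hp x]
    have h2 := Finset.sum_le_sum h1
    rw [Finset.sum_add_distrib, ← Finset.mul_sum, ← Finset.mul_sum] at h2
    nlinarith [gibbs]
  -- conclude
  have h3 : ∑ x, p x * (Real.log (r x) / L) ≤ ∑ x, p x * (Real.log (q x) / L) := by
    have e1 : ∀ (f : X → ℝ), ∑ x, p x * (f x / L) = (∑ x, p x * f x) / L := by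
      intro f
      rw [Finset.sum_congr rfl (fun x _ => (mul_div_assoc (p x) (f x) L).symm),
        ← Finset.sum_div]
    rw [e1, e1]
    exact div_le_div_of_nonneg_right key hL.le
  linarith
end

section
/- For probability distributions p, r over a finite alphabet X with all entries strictly positive, and a ∈ (0,1] such that p + a(r − p) has strictly positive entries, the derivative of the entropy along the segment satisfies (d/da) H(p + a(r − p)) = (1/a) · ( H(p + a(r−p)) − H(p) − D( p ‖ p + a(r−p) ) ). -/
open Finset

/-- **Entropy derivative along a segment.** For strictly positive probability distributions
`p, r` over a finite alphabet `X` and `a ∈ (0,1]` with `p + a(r − p)` strictly positive,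
`(d/da) H(p + a(r − p)) = (1/a)(H(p + a(r−p)) − H(p) − D(p ‖ p + a(r−p)))`. -/
theorem entropy_deriv_along_segment {X : Type*} [Fintype X] [Nonempty X]
    (p r : X → ℝ)
    (hp : ∀ x, 0 < p x) (hpsum : ∑ x, p x = 1)
    (hr : ∀ x, 0 < r x) (hrsum : ∑ x, r x = 1)
    (a : ℝ) (ha0 : 0 < a) (ha1 : a ≤ 1)
    (hpos : ∀ x, 0 < p x + a * (r x - p x)) :
    HasDerivAt
      (fun t : ℝ => -∑ x, (p x + t * (r x - p x)) * Real.logb 2 (p x + t * (r x - p x)))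
      ((1 / a) *
        ((-∑ x, (p x + a * (r x - p x)) * Real.logb 2 (p x + a * (r x - p x)))
          - (-∑ x, p x * Real.logb 2 (p x))
          - ∑ x, p x * Real.logb 2 (p x / (p x + a * (r x - p x)))))
      a := by
  set q : X → ℝ := fun x => p x + a * (r x - p x) with hq
  have hterm : ∀ x : X, HasDerivAt
      (fun t : ℝ => (p x + t * (r x - p x)) * Real.logb 2 (p x + t * (r x - p x)))
      ((r x - p x) * Real.logb 2 (q x) + (r x - p x) / Real.log 2) a := by
    intro x
    have h1 : HasDerivAt (fun t : ℝ => p x + t * (r x - p x)) (r x - p x) a :=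
      (hasDerivAt_mul_const (r x - p x)).const_add (p x)
    have h2 : HasDerivAt (fun t : ℝ => Real.log (p x + t * (r x - p x)))
        ((r x - p x) / (q x)) a := h1.log (ne_of_gt (hpos x))
    have h3 : HasDerivAt (fun t : ℝ => Real.logb 2 (p x + t * (r x - p x)))
        ((r x - p x) / (q x) / Real.log 2) a := by
      simpa [Real.logb, div_eq_mul_inv] using h2.mul_const (Real.log 2)⁻¹
    have := h1.fun_mul h3
    refine this.congr_deriv ?_
    rw [show q x = p x + a * (r x - p x) from rfl]
    congr 1
    field_simp [(hpos x).ne']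
  have hsum : HasDerivAt
      (fun t : ℝ => -∑ x, (p x + t * (r x - p x)) * Real.logb 2 (p x + t * (r x - p x)))
      (-∑ x, ((r x - p x) * Real.logb 2 (q x) + (r x - p x) / Real.log 2)) a := by
    exact (HasDerivAt.fun_sum (fun x _ => hterm x)).neg
  convert hsum using 1
  have hzero : ∑ x, (r x - p x) = 0 := by
    rw [Finset.sum_sub_distrib, hpsum, hrsum]; ring
  have hlogb : ∀ x : X, Real.logb 2 (p x / q x) = Real.logb 2 (p x) - Real.logb 2 (q x) :=
    fun x => Real.logb_div (hp x).ne' (hpos x).ne'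
  have hD : ∑ x, p x * Real.logb 2 (p x / q x)
      = ∑ x, p x * Real.logb 2 (p x) - ∑ x, p x * Real.logb 2 (q x) := by
    rw [← Finset.sum_sub_distrib]
    exact Finset.sum_congr rfl fun x _ => by rw [hlogb x]; ring
  have hqsplit : ∀ x : X, q x * Real.logb 2 (q x)
      = p x * Real.logb 2 (q x) + a * ((r x - p x) * Real.logb 2 (q x)) := fun x => by
    simp only [hq]; ring
  have hsum2 : ∑ x, (r x - p x) / Real.log 2 = 0 := by
    rw [← Finset.sum_div, hzero, zero_div]
  rw [Finset.sum_add_distrib, hsum2, add_zero, hD]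
  have : ∑ x, q x * Real.logb 2 (q x)
      = ∑ x, p x * Real.logb 2 (q x) + a * ∑ x, (r x - p x) * Real.logb 2 (q x) := by
    rw [Finset.mul_sum, ← Finset.sum_add_distrib]
    exact Finset.sum_congr rfl fun x _ => hqsplit x
  rw [this]
  field_simp
  ring
end

section
/- Let p and q be probability distributions over a finite alphabet X and λ ∈ [0,1]. Then H( λq + (1−λ)p ) ≤ H(p) + 3|X| λ log(2/λ), where for λ = 0 the right-hand side is interpreted as H(p). -/
open Finset

/-- Pointwise subadditivity of `x ↦ -x log x` on nonnegative reals. -/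
lemma negMulLog_add_le_aux {a b : ℝ} (ha : 0 ≤ a) (hb : 0 ≤ b) :
    Real.negMulLog (a + b) ≤ Real.negMulLog a + Real.negMulLog b := by
  rcases eq_or_lt_of_le ha with ha' | ha'
  · simp [← ha']
  rcases eq_or_lt_of_le hb with hb' | hb'
  · simp [← hb']
  have hab : 0 < a + b := by linarith
  have h1 : Real.log a ≤ Real.log (a + b) := Real.log_le_log ha' (by linarith)
  have h2 : Real.log b ≤ Real.log (a + b) := Real.log_le_log hb' (by linarith)
  simp only [Real.negMulLog, neg_mul]
  nlinarith [mul_le_mul_of_nonneg_left h1 ha, mul_le_mul_of_nonneg_left h2 hb]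

/-- Entropy is at most `log` of the cardinality. -/
lemma sum_negMulLog_le_log_card {X : Type*} [Fintype X] [Nonempty X]
    (q : X → ℝ) (hq : ∀ x, 0 ≤ q x) (hqsum : ∑ x, q x = 1) :
    ∑ x, Real.negMulLog (q x) ≤ Real.log (Fintype.card X) := by
  set n : ℝ := (Fintype.card X : ℝ) with hn
  have hn0 : 0 < n := by
    have := Fintype.card_pos (α := X)
    simp only [hn]; exact_mod_cast this
  have key : ∀ x : X, Real.negMulLog (q x) ≤ q x * Real.log n + (1 / n - q x) := by
    intro x
    rcases eq_or_lt_of_le (hq x) with h | h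
    · simp [← h, Real.negMulLog]; positivity
    · have h1 : 0 < n * q x := by positivity
      have h2 : Real.log (1 / (n * q x)) ≤ 1 / (n * q x) - 1 :=
        Real.log_le_sub_one_of_pos (by positivity)
      have h3 : Real.log (1 / (n * q x)) = -(Real.log n + Real.log (q x)) := by
        rw [one_div, Real.log_inv, Real.log_mul (ne_of_gt hn0) (ne_of_gt h)]
      rw [h3] at h2
      have h4 := mul_le_mul_of_nonneg_left h2 (hq x)
      have h5 : q x * (1 / (n * q x) - 1) = 1 / n - q x := by
        field_simp
      rw [h5] at h4
      simp only [Real.negMulLog, neg_mul]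
      nlinarith
  calc ∑ x, Real.negMulLog (q x)
      ≤ ∑ x, (q x * Real.log n + (1 / n - q x)) := Finset.sum_le_sum fun x _ => key x
    _ = Real.log n := by
        rw [Finset.sum_add_distrib, ← Finset.sum_mul, hqsum, one_mul,
          Finset.sum_sub_distrib, hqsum, Finset.sum_const, Finset.card_univ, nsmul_eq_mul, ← hn]
        field_simp
        ring

/-- **Entropy of a mixture.** For probability distributions `p, q` over a finite alphabet `X`
and `λ ∈ [0,1]`, `H(λq + (1−λ)p) ≤ H(p) + 3|X| λ log₂(2/λ)` (at `λ = 0` the extra term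
vanishes, by the Lean conventions `2/0 = 0` and `log₂ 0 = 0`). -/
theorem entropy_mixture_bound {X : Type*} [Fintype X] [Nonempty X]
    (p q : X → ℝ)
    (hp : ∀ x, 0 ≤ p x) (hpsum : ∑ x, p x = 1)
    (hq : ∀ x, 0 ≤ q x) (hqsum : ∑ x, q x = 1)
    (l : ℝ) (hl0 : 0 ≤ l) (hl1 : l ≤ 1) :
    (-∑ x, (l * q x + (1 - l) * p x) * Real.logb 2 (l * q x + (1 - l) * p x))
      ≤ (-∑ x, p x * Real.logb 2 (p x)) +
          3 * (Fintype.card X : ℝ) * l * Real.logb 2 (2 / l) := by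
  have hlog2 : (0:ℝ) < Real.log 2 := Real.log_pos one_lt_two
  set n : ℝ := (Fintype.card X : ℝ) with hn
  have hn1 : 1 ≤ n := by
    have := Fintype.card_pos (α := X)
    simp only [hn]; exact_mod_cast this
  set m : X → ℝ := fun x => l * q x + (1 - l) * p x with hm
  -- the natural-log version
  have key : ∑ x, Real.negMulLog (m x) ≤
      ∑ x, Real.negMulLog (p x) + 3 * n * l * Real.log (2 / l) := by
    rcases eq_or_lt_of_le hl0 with h0 | h0
    · have : ∀ x, m x = p x := by intro x; simp [hm, ← h0]
      simp only [this, ← h0]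
      simp
    -- l > 0
    have hstep1 : ∑ x, Real.negMulLog (m x) ≤
        ∑ x, Real.negMulLog (l * q x) + ∑ x, Real.negMulLog ((1 - l) * p x) := by
      rw [← Finset.sum_add_distrib]
      exact Finset.sum_le_sum fun x _ => negMulLog_add_le_aux
        (mul_nonneg hl0 (hq x)) (mul_nonneg (by linarith) (hp x))
    have hexp1 : ∑ x, Real.negMulLog (l * q x)
        = Real.negMulLog l + l * ∑ x, Real.negMulLog (q x) := by
      have : ∀ x, Real.negMulLog (l * q x)
          = q x * Real.negMulLog l + l * Real.negMulLog (q x) := fun x =>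
        Real.negMulLog_mul l (q x)
      simp only [this]
      rw [Finset.sum_add_distrib, ← Finset.sum_mul, hqsum, ← Finset.mul_sum, one_mul]
    have hexp2 : ∑ x, Real.negMulLog ((1 - l) * p x)
        = Real.negMulLog (1 - l) + (1 - l) * ∑ x, Real.negMulLog (p x) := by
      have : ∀ x, Real.negMulLog ((1 - l) * p x)
          = p x * Real.negMulLog (1 - l) + (1 - l) * Real.negMulLog (p x) := fun x =>
        Real.negMulLog_mul (1 - l) (p x)
      simp only [this]
      rw [Finset.sum_add_distrib, ← Finset.sum_mul, hpsum, ← Finset.mul_sum, one_mul]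
    have hHq : ∑ x, Real.negMulLog (q x) ≤ Real.log n :=
      sum_negMulLog_le_log_card q hq hqsum
    have hHp : 0 ≤ ∑ x, Real.negMulLog (p x) := by
      apply Finset.sum_nonneg
      intro x _
      refine Real.negMulLog_nonneg (hp x) ?_
      calc p x ≤ ∑ y, p y := Finset.single_le_sum (fun y _ => hp y) (Finset.mem_univ x)
        _ = 1 := hpsum
    -- bound negMulLog (1-l) ≤ l
    have hbin : Real.negMulLog (1 - l) ≤ l := by
      rcases eq_or_lt_of_le hl1 with h1 | h1
      · rw [h1]; norm_num [Real.negMulLog]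
      · have hpos : 0 < 1 - l := by linarith
        have := Real.log_le_sub_one_of_pos (x := 1 / (1 - l)) (by positivity)
        rw [one_div, Real.log_inv] at this
        have h4 := mul_le_mul_of_nonneg_left this (le_of_lt hpos)
        simp only [Real.negMulLog, neg_mul]
        have h5 : (1 - l) * ((1 - l)⁻¹ - 1) = l := by field_simp; ring
        nlinarith
    -- negMulLog l = l * log (2/l) - l * log 2
    have hnml : Real.negMulLog l = l * Real.log (2 / l) - l * Real.log 2 := by
      rw [Real.negMulLog, Real.log_div (by norm_num) (ne_of_gt h0)]
      ring
    have hlogn : Real.log n ≤ n * Real.log 2 := by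
      calc Real.log n ≤ Real.log ((2:ℝ) ^ Fintype.card X) := by
            apply Real.log_le_log (by positivity)
            rw [hn]
            exact_mod_cast (Nat.lt_two_pow_self (n := Fintype.card X)).le
        _ = n * Real.log 2 := by rw [Real.log_pow, hn]
    have hL : Real.log 2 ≤ Real.log (2 / l) := by
      apply Real.log_le_log (by norm_num)
      rw [le_div_iff₀ h0]; nlinarith
    have hlog2' : (0.6931471803 : ℝ) < Real.log 2 := Real.log_two_gt_d9
    calc ∑ x, Real.negMulLog (m x)
        ≤ Real.negMulLog l + l * ∑ x, Real.negMulLog (q x)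
          + (Real.negMulLog (1 - l) + (1 - l) * ∑ x, Real.negMulLog (p x)) := by
          rw [← hexp1, ← hexp2]; exact hstep1
      _ ≤ ∑ x, Real.negMulLog (p x) + 3 * n * l * Real.log (2 / l) := by
          have hq' : l * ∑ x, Real.negMulLog (q x) ≤ l * Real.log n :=
            mul_le_mul_of_nonneg_left hHq hl0
          have hp' : (1 - l) * ∑ x, Real.negMulLog (p x) ≤ ∑ x, Real.negMulLog (p x) := by
            nlinarith
          have hln' : l * Real.log n ≤ l * (n * Real.log 2) :=
            mul_le_mul_of_nonneg_left hlogn hl0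
          have hL0 : 0 ≤ Real.log (2 / l) := le_trans hlog2.le hL
          have hlc : l * (1 - Real.log 2) ≤ l * Real.log (2 / l) := by
            apply mul_le_mul_of_nonneg_left _ hl0
            linarith
          have hq'' : l * (n * Real.log 2) ≤ l * (n * Real.log (2 / l)) := by
            apply mul_le_mul_of_nonneg_left _ hl0
            exact mul_le_mul_of_nonneg_left hL (by linarith)
          have hA : (l * Real.log (2 / l)) * (n + 2) ≤ (l * Real.log (2 / l)) * (3 * n) := by
            apply mul_le_mul_of_nonneg_left _ (mul_nonneg hl0 hL0)
            linarith
          rw [hnml]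
          nlinarith
  -- convert to logb
  have lhs_eq : (-∑ x, m x * Real.logb 2 (m x)) = (∑ x, Real.negMulLog (m x)) / Real.log 2 := by
    rw [Finset.sum_div, ← Finset.sum_neg_distrib]
    congr 1
    ext x
    rw [Real.logb, Real.negMulLog]
    field_simp
  have rhs_eq : (-∑ x, p x * Real.logb 2 (p x)) + 3 * n * l * Real.logb 2 (2 / l)
      = (∑ x, Real.negMulLog (p x) + 3 * n * l * Real.log (2 / l)) / Real.log 2 := by
    rw [add_div, Finset.sum_div, ← Finset.sum_neg_distrib]
    congr 1
    · congr 1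
      ext x
      rw [Real.logb, Real.negMulLog]
      field_simp
    · rw [Real.logb]
      ring
  rw [lhs_eq, rhs_eq]
  exact div_le_div_of_nonneg_right key hlog2.le
end

section
/- Let p be a probability distribution over a finite alphabet X whose coordinates all exceed λ, where 0 < λ < 1/4, and let q be any probability distribution on X. Then H( λq + (1−λ)p ) ≤ H(p) + (|X| − 1) λ log(1/λ). -/
open Finset

/-- Pointwise concavity-type inequality: `a log b - a log a ≤ b - a` for `a b > 0`. -/
lemma mix_pointwise_log_le {a b : ℝ} (ha : 0 < a) (hb : 0 < b) :
    a * Real.log b - a * Real.log a ≤ b - a := by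
  have h := Real.log_le_sub_one_of_pos (div_pos hb ha)
  rw [Real.log_div hb.ne' ha.ne'] at h
  have := mul_le_mul_of_nonneg_left h ha.le
  have hne : a ≠ 0 := ha.ne'
  calc a * Real.log b - a * Real.log a = a * (Real.log b - Real.log a) := by ring
    _ ≤ a * (b / a - 1) := this
    _ = b - a := by field_simp

/-- **Entropy of a mixture, all symbol probabilities large.** If all coordinates of the
probability distribution `p` exceed `λ` with `0 < λ < 1/4`, and `q` is any probability
distribution, then `H(λq + (1−λ)p) ≤ H(p) + (|X|−1) λ log₂(1/λ)`. -/
theorem entropy_mixture_bound_of_min_gt {X : Type*} [Fintype X] [Nonempty X]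
    (p q : X → ℝ)
    (hp : ∀ x, 0 ≤ p x) (hpsum : ∑ x, p x = 1)
    (hq : ∀ x, 0 ≤ q x) (hqsum : ∑ x, q x = 1)
    (l : ℝ) (hl0 : 0 < l) (hl1 : l < 1/4)
    (hmin : ∀ x, l < p x) :
    (-∑ x, (l * q x + (1 - l) * p x) * Real.logb 2 (l * q x + (1 - l) * p x))
      ≤ (-∑ x, p x * Real.logb 2 (p x)) +
          ((Fintype.card X : ℝ) - 1) * l * Real.logb 2 (1 / l) := by
  set m : X → ℝ := fun x => l * q x + (1 - l) * p x with hm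
  set C : ℝ := (Fintype.card X : ℝ) - 1 with hC
  have hl1' : l < 1 := by linarith
  have hppos : ∀ x, 0 < p x := fun x => lt_trans hl0 (hmin x)
  have hmpos : ∀ x, 0 < m x := by
    intro x
    have h1 := hq x
    have h2 := hppos x
    simp only [hm]
    nlinarith
  have hmsum : ∑ x, m x = 1 := by
    simp only [hm]
    rw [Finset.sum_add_distrib, ← Finset.mul_sum, ← Finset.mul_sum, hpsum, hqsum]
    ring
  have hple : ∀ x, p x ≤ 1 := by
    intro x
    calc p x ≤ ∑ y, p y := Finset.single_le_sum (fun y _ => hp y) (Finset.mem_univ x)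
      _ = 1 := hpsum
  have hlogl : Real.log (1 / l) = -Real.log l := by
    rw [one_div, Real.log_inv]
  -- Step 1: -∑ m log m ≤ -∑ m log p
  have step1 : -∑ x, m x * Real.log (m x) ≤ -∑ x, m x * Real.log (p x) := by
    have h : ∑ x, m x * Real.log (p x) - ∑ x, m x * Real.log (m x)
        ≤ ∑ x, (p x - m x) := by
      rw [← Finset.sum_sub_distrib]
      apply Finset.sum_le_sum
      intro x _
      exact mix_pointwise_log_le (hmpos x) (hppos x)
    rw [Finset.sum_sub_distrib, hpsum, hmsum] at h
    linarith
  -- Step 2: -∑ m log p = -∑ p log p + l * S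
  have step2 : -∑ x, m x * Real.log (p x)
      = -∑ x, p x * Real.log (p x) + l * ∑ x, (p x - q x) * Real.log (p x) := by
    have hterm : ∀ x, m x * Real.log (p x)
        = p x * Real.log (p x) - l * ((p x - q x) * Real.log (p x)) := by
      intro x; simp only [hm]; ring
    rw [Finset.sum_congr rfl (fun x _ => hterm x), Finset.sum_sub_distrib,
      ← Finset.mul_sum]
    ring
  -- Step 3: bound S termwise
  have step3 : ∑ x, (p x - q x) * Real.log (p x) ≤ Real.log (1 / l) := by
    calc ∑ x, (p x - q x) * Real.log (p x) ≤ ∑ x, q x * Real.log (1 / l) := by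
          apply Finset.sum_le_sum
          intro x _
          have hlogp : Real.log (p x) ≤ 0 := Real.log_nonpos (hppos x).le (hple x)
          have hll : Real.log l ≤ Real.log (p x) := Real.log_le_log hl0 (hmin x).le
          have hqx := hq x
          have hpx := (hppos x).le
          rw [hlogl]
          nlinarith
      _ = Real.log (1 / l) := by rw [← Finset.sum_mul, hqsum, one_mul]
  -- Step 4: l * S ≤ C * l * log (1/l)
  have step4 : l * ∑ x, (p x - q x) * Real.log (p x) ≤ C * l * Real.log (1 / l) := by
    by_cases hcard : Fintype.card X = 1
    · obtain ⟨a, ha⟩ := Fintype.card_eq_one_iff.mp hcard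
      have huniv : (Finset.univ : Finset X) = {a} := by
        ext b; simp [ha b]
      have hpa : p a = 1 := by rw [← hpsum, huniv, Finset.sum_singleton]
      have hS : ∑ x, (p x - q x) * Real.log (p x) = 0 := by
        rw [huniv, Finset.sum_singleton, hpa, Real.log_one, mul_zero]
      rw [hS, hC, hcard]
      norm_num
    · have h2 : 2 ≤ Fintype.card X := by
        have := Fintype.card_pos (α := X)
        omega
      have hC1 : (1 : ℝ) ≤ C := by
        rw [hC]
        have : (2 : ℝ) ≤ (Fintype.card X : ℝ) := by exact_mod_cast h2
        linarith
      have hLpos : 0 < Real.log (1 / l) := by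
        apply Real.log_pos
        rw [one_div]
        rw [lt_inv_comm₀] <;> norm_num <;> linarith
      have h5 : l * ∑ x, (p x - q x) * Real.log (p x) ≤ l * Real.log (1 / l) :=
        mul_le_mul_of_nonneg_left step3 hl0.le
      have h6 : 1 * (l * Real.log (1 / l)) ≤ C * (l * Real.log (1 / l)) :=
        mul_le_mul_of_nonneg_right hC1 (by positivity)
      calc l * ∑ x, (p x - q x) * Real.log (p x) ≤ l * Real.log (1 / l) := h5
        _ = 1 * (l * Real.log (1 / l)) := by ring
        _ ≤ C * (l * Real.log (1 / l)) := h6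
        _ = C * l * Real.log (1 / l) := by ring
  -- Combine in natural log
  have key : -∑ x, m x * Real.log (m x)
      ≤ -∑ x, p x * Real.log (p x) + C * l * Real.log (1 / l) := by
    calc -∑ x, m x * Real.log (m x) ≤ -∑ x, m x * Real.log (p x) := step1
      _ = -∑ x, p x * Real.log (p x) + l * ∑ x, (p x - q x) * Real.log (p x) := step2
      _ ≤ -∑ x, p x * Real.log (p x) + C * l * Real.log (1 / l) := by linarith [step4]
  -- Convert to logb 2
  have hlog2 : 0 < Real.log 2 := Real.log_pos (by norm_num)
  simp only [Real.logb, ← mul_div_assoc, ← Finset.sum_div, ← neg_div, ← add_div]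
  exact div_le_div_of_nonneg_right key hlog2.le
end

section
/- Let p_d and p be probability distributions over a finite alphabet X with |X| ≥ 2, and let p_u be the uniform distribution. If ‖p − p_u‖_∞ ≥ 2|X| · ‖p_d − p_u‖_∞^{1/2}, then log|X| − H(p_d) − D(p_d ‖ p) ≤ 0 (when D(p_d‖p) is finite). -/
open Finset

private lemma log_le_of_one_le {t : ℝ} (ht : 1 ≤ t) :
    Real.log t ≤ t - 1 - (t - 1)^2 / (2 * t) := by
  have ht0 : (0:ℝ) < t := lt_of_lt_of_le one_pos ht
  have key : Real.log t ≤ (t - t⁻¹) / 2 := by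
    set f : ℝ → ℝ := fun x => (x - x⁻¹) / 2 - Real.log x with hf
    have hmono : MonotoneOn f (Set.Ici 1) := by
      have hderiv : ∀ x ∈ interior (Set.Ici (1:ℝ)),
          HasDerivAt f ((1 + (x^2)⁻¹) / 2 - x⁻¹) x := by
        intro x hx
        rw [interior_Ici] at hx
        have hx0 : x ≠ 0 := by
          have : (1:ℝ) < x := hx
          positivity
        have h1 : HasDerivAt (fun y : ℝ => (y - y⁻¹) / 2) ((1 + (x^2)⁻¹)/2) x := by
          have := ((hasDerivAt_id x).sub (hasDerivAt_inv hx0)).div_const 2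
          simpa [sub_neg_eq_add] using this
        exact h1.sub (Real.hasDerivAt_log hx0)
      apply monotoneOn_of_deriv_nonneg (convex_Ici 1)
      · apply ContinuousOn.sub
        · apply ContinuousOn.div_const
          apply continuousOn_id.sub
          exact ContinuousOn.inv₀ continuousOn_id (fun x hx => by
            have : (1:ℝ) ≤ x := hx
            positivity)
        · exact Real.continuousOn_log.mono (fun x hx => by
            have : (1:ℝ) ≤ x := hx
            simp only [Set.mem_compl_iff, Set.mem_singleton_iff]
            positivity)
      · intro x hx
        exact (hderiv x hx).differentiableAt.differentiableWithinAt
      · intro x hx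
        rw [(hderiv x hx).deriv]
        rw [interior_Ici] at hx
        have hx0 : (0:ℝ) < x := lt_trans one_pos hx
        have h4 : (x^2)⁻¹ = (x⁻¹)^2 := by rw [inv_pow]
        rw [h4]
        nlinarith [sq_nonneg (x⁻¹ - 1)]
    have h1 := hmono (Set.self_mem_Ici) (Set.mem_Ici.mpr ht) ht
    simp only [f] at h1
    simp only [inv_one, Real.log_one, sub_self, zero_div, sub_zero] at h1
    linarith
  have heq : (t - t⁻¹) / 2 = t - 1 - (t - 1)^2 / (2 * t) := by
    field_simp
    ring
  linarith [heq ▸ key]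

private lemma log_le_of_le_one {t : ℝ} (ht0 : 0 < t) (ht : t ≤ 1) :
    Real.log t ≤ t - 1 - (t - 1)^2 / 2 := by
  set f : ℝ → ℝ := fun x => x - 1 - (x - 1)^2 / 2 - Real.log x with hf
  have hanti : AntitoneOn f (Set.Icc t 1) := by
    have hderiv : ∀ x ∈ interior (Set.Icc t 1),
        HasDerivAt f (1 - (x - 1) - x⁻¹) x := by
      intro x hx
      rw [interior_Icc] at hx
      have hx0 : x ≠ 0 := (lt_trans ht0 hx.1).ne'
      have h1 : HasDerivAt (fun y : ℝ => y - 1 - (y - 1)^2 / 2) (1 - (x - 1)) x := by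
        have h2 : HasDerivAt (fun y : ℝ => (y - 1)^2 / 2) (x - 1) x := by
          have := (((hasDerivAt_id x).sub_const 1).pow 2).div_const 2
          simpa using this
        exact ((hasDerivAt_id' x).sub_const 1).sub h2
      exact h1.sub (Real.hasDerivAt_log hx0)
    apply antitoneOn_of_deriv_nonpos (convex_Icc t 1)
    · apply ContinuousOn.sub
      · fun_prop
      · exact Real.continuousOn_log.mono (fun x hx => by
          have := hx.1
          simp only [Set.mem_compl_iff, Set.mem_singleton_iff]
          nlinarith)
    · intro x hx
      exact (hderiv x hx).differentiableAt.differentiableWithinAt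
    · intro x hx
      rw [(hderiv x hx).deriv]
      rw [interior_Icc] at hx
      have hx0 : (0:ℝ) < x := lt_trans ht0 hx.1
      rw [sub_nonpos, ← sub_nonneg, inv_eq_one_div, ← sub_nonneg] at *
      have : 0 ≤ 1/x - (1 - (x-1)) := by
        rw [sub_nonneg, le_div_iff₀ hx0]
        nlinarith [sq_nonneg (x - 1)]
      linarith
  have h1 := hanti (Set.mem_Icc.mpr ⟨le_refl t, ht⟩) (Set.mem_Icc.mpr ⟨ht, le_refl 1⟩) ht
  simp only [f] at h1
  norm_num at h1
  linarith

private lemma log_le_quad {t N : ℝ} (ht0 : 0 < t) (htN : t ≤ N) (hN : 1 ≤ N) :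
    Real.log t ≤ t - 1 - (t - 1)^2 / (2 * N) := by
  rcases le_or_gt t 1 with h | h
  · have h1 := log_le_of_le_one ht0 h
    have h2 : (t-1)^2 / (2*N) ≤ (t-1)^2 / 2 := by
      apply div_le_div_of_nonneg_left (sq_nonneg _) (by norm_num) (by linarith)
    linarith
  · have h1 := log_le_of_one_le h.le
    have : (t-1)^2 / (2*N) ≤ (t-1)^2 / (2*t) := by
      apply div_le_div_of_nonneg_left (sq_nonneg _) (by linarith) (by linarith)
    linarith

set_option maxHeartbeats 1000000 in
/-- If `‖p − p_u‖_∞ ≥ 2|X| ‖p_d − p_u‖_∞^{1/2}` (with `p_u` uniform, `|X| ≥ 2`,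
and `p_d ≪ p` so that `D(p_d‖p)` is finite), then
`log₂|X| − H(p_d) − D(p_d‖p) ≤ 0`. -/
theorem nonpositive_derivative_condition {X : Type*} [Fintype X] [Nonempty X]
    (hX : 2 ≤ Fintype.card X)
    (pd p : X → ℝ)
    (hpd : ∀ x, 0 ≤ pd x) (hpdsum : ∑ x, pd x = 1)
    (hp : ∀ x, 0 ≤ p x) (hpsum : ∑ x, p x = 1)
    (hac : ∀ x, p x = 0 → pd x = 0)
    (hcond : Finset.univ.sup' Finset.univ_nonempty
        (fun x => |p x - 1 / (Fintype.card X : ℝ)|)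
      ≥ 2 * (Fintype.card X : ℝ) *
          Real.sqrt (Finset.univ.sup' Finset.univ_nonempty
            (fun x => |pd x - 1 / (Fintype.card X : ℝ)|))) :
    Real.logb 2 (Fintype.card X) - (-∑ x, pd x * Real.logb 2 (pd x))
        - ∑ x, pd x * Real.logb 2 (pd x / p x) ≤ 0 := by
  classical
  set N : ℝ := (Fintype.card X : ℝ) with hNdef
  have hN2 : (2:ℝ) ≤ N := by rw [hNdef]; exact_mod_cast hX
  have hN0 : (0:ℝ) < N := by linarith
  set δd : ℝ := Finset.univ.sup' Finset.univ_nonempty (fun x => |pd x - 1 / N|) with hδd_def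
  set δp : ℝ := Finset.univ.sup' Finset.univ_nonempty (fun x => |p x - 1 / N|) with hδp_def
  have hδd_le : ∀ x, |pd x - 1 / N| ≤ δd := fun x =>
    Finset.le_sup' (fun x => |pd x - 1 / N|) (Finset.mem_univ x)
  have hδd0 : 0 ≤ δd :=
    le_trans (abs_nonneg _) (hδd_le (Classical.arbitrary X))
  have hp_le_one : ∀ x, p x ≤ 1 := by
    intro x
    rw [← hpsum]
    exact Finset.single_le_sum (fun i _ => hp i) (Finset.mem_univ x)
  have hδp1 : δp ≤ 1 := by
    apply Finset.sup'_le
    intro x _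
    rw [abs_le]
    constructor
    · have h1 : 1 / N ≤ 1 := by
        rw [div_le_one hN0]; linarith
      have := hp x
      linarith
    · have h1 : 0 ≤ 1 / N := by positivity
      have := hp_le_one x
      linarith
  -- δd is small
  have hsqrt : 2 * N * Real.sqrt δd ≤ δp := hcond
  have hsqrt_nonneg := Real.sqrt_nonneg δd
  have hδp0 : 0 ≤ δp := le_trans (by positivity) hsqrt
  have hδd_small : δd ≤ 1 / (4 * N ^ 2) := by
    have h1 : Real.sqrt δd ≤ 1 / (2 * N) := by
      rw [le_div_iff₀ (by positivity)]
      nlinarith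
    have h3 : Real.sqrt δd * Real.sqrt δd ≤ (1/(2*N)) * (1/(2*N)) :=
      mul_le_mul h1 h1 hsqrt_nonneg (by positivity)
    have h4 : (1/(2*N)) * (1/(2*N)) = 1/(4*N^2) := by field_simp; ring
    have h5 := Real.mul_self_sqrt hδd0
    linarith
  have hpd_pos : ∀ x, 0 < pd x := by
    intro x
    have h1 := (abs_le.mp (hδd_le x)).1
    have h2 : 1 / (4 * N ^ 2) < 1 / N := by
      apply div_lt_div_of_pos_left one_pos hN0
      nlinarith
    have : 1 / N - δd ≤ pd x := by linarith
    linarith [hδd_small, h2]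
  have hp_pos : ∀ x, 0 < p x := by
    intro x
    rcases (hp x).lt_or_eq with h | h
    · exact h
    · exact absurd (hac x h.symm) (hpd_pos x).ne'
  -- key inequality in natural logs
  have key : ∑ x, pd x * Real.log (N * p x) ≤ 0 := by
    obtain ⟨x0, -, hx0⟩ := Finset.exists_mem_eq_sup' Finset.univ_nonempty
      (fun x => |p x - 1 / N|)
    -- per-term bounds
    have per_term : ∀ x, pd x * Real.log (N * p x) ≤ pd x * (N * p x - 1) := by
      intro x
      exact mul_le_mul_of_nonneg_left
        (Real.log_le_sub_one_of_pos (mul_pos hN0 (hp_pos x))) (hpd x)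
    have at_x0 : pd x0 * Real.log (N * p x0)
        ≤ pd x0 * (N * p x0 - 1 - (N * p x0 - 1) ^ 2 / (2 * N)) := by
      apply mul_le_mul_of_nonneg_left _ (hpd x0)
      apply log_le_quad (mul_pos hN0 (hp_pos x0)) _ (by linarith)
      calc N * p x0 ≤ N * 1 := by
            exact mul_le_mul_of_nonneg_left (hp_le_one x0) hN0.le
        _ = N := mul_one N
    have split : ∑ x, pd x * Real.log (N * p x)
        = pd x0 * Real.log (N * p x0) + ∑ x ∈ Finset.univ.erase x0, pd x * Real.log (N * p x) :=
      (Finset.add_sum_erase _ _ (Finset.mem_univ x0)).symm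
    have split2 : ∑ x, pd x * (N * p x - 1)
        = pd x0 * (N * p x0 - 1) + ∑ x ∈ Finset.univ.erase x0, pd x * (N * p x - 1) :=
      (Finset.add_sum_erase _ _ (Finset.mem_univ x0)).symm
    have sum_erase_le : ∑ x ∈ Finset.univ.erase x0, pd x * Real.log (N * p x)
        ≤ ∑ x ∈ Finset.univ.erase x0, pd x * (N * p x - 1) :=
      Finset.sum_le_sum (fun x _ => per_term x)
    have step1 : ∑ x, pd x * Real.log (N * p x)
        ≤ ∑ x, pd x * (N * p x - 1) - pd x0 * (N * p x0 - 1) ^ 2 / (2 * N) := by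
      rw [split, split2]
      have := at_x0
      ring_nf
      ring_nf at this sum_erase_le
      linarith
    -- bound on the linear sum
    have sum_lin : ∑ x, pd x * (N * p x - 1) = N * (∑ x, pd x * p x) - 1 := by
      simp_rw [mul_sub, mul_one]
      rw [Finset.sum_sub_distrib, hpdsum, Finset.mul_sum]
      congr 1
      apply Finset.sum_congr rfl
      intro x _
      ring
    have inner_prod : ∑ x, (pd x - 1 / N) * (p x - 1 / N) = ∑ x, pd x * p x - 1 / N := by
      have expand : ∀ x, (pd x - 1 / N) * (p x - 1 / N)
          = pd x * p x - (1/N) * pd x - (1/N) * p x + (1/N) * (1/N) := by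
        intro x; ring
      rw [Finset.sum_congr rfl (fun x _ => expand x)]
      rw [Finset.sum_add_distrib, Finset.sum_sub_distrib, Finset.sum_sub_distrib,
        ← Finset.mul_sum, ← Finset.mul_sum, hpdsum, hpsum, Finset.sum_const,
        Finset.card_univ, nsmul_eq_mul, ← hNdef]
      field_simp
      ring
    have inner_bd : ∑ x, (pd x - 1 / N) * (p x - 1 / N) ≤ 2 * δd := by
      have hterm : ∀ x, (pd x - 1 / N) * (p x - 1 / N) ≤ δd * (p x + 1 / N) := by
        intro x
        calc (pd x - 1 / N) * (p x - 1 / N) ≤ |(pd x - 1 / N) * (p x - 1 / N)| :=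
              le_abs_self _
          _ = |pd x - 1 / N| * |p x - 1 / N| := abs_mul _ _
          _ ≤ δd * (p x + 1 / N) := by
              apply mul_le_mul (hδd_le x) _ (abs_nonneg _) hδd0
              have h1 : |p x - 1 / N| ≤ |p x| + |1 / N| := abs_sub _ _
              rw [abs_of_nonneg (hp x), abs_of_nonneg (by positivity : (0:ℝ) ≤ 1/N)] at h1
              exact h1
      calc ∑ x, (pd x - 1 / N) * (p x - 1 / N) ≤ ∑ x, δd * (p x + 1 / N) :=
            Finset.sum_le_sum (fun x _ => hterm x)
        _ = δd * (1 + N * (1 / N)) := by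
            rw [← Finset.mul_sum, Finset.sum_add_distrib, hpsum, Finset.sum_const,
              Finset.card_univ, nsmul_eq_mul, ← hNdef]
        _ = 2 * δd := by
            rw [mul_one_div, div_self hN0.ne']
            ring
    have sum_pp : ∑ x, pd x * p x ≤ 1 / N + 2 * δd := by linarith [inner_prod ▸ inner_bd]
    -- the quadratic term
    have sq_eq : (N * p x0 - 1) ^ 2 = N ^ 2 * δp ^ 2 := by
      have h1 : N * p x0 - 1 = N * (p x0 - 1 / N) := by
        rw [mul_sub, mul_one_div, div_self hN0.ne']
      have hx0' : δp = |p x0 - 1 / N| := hx0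
      rw [h1, mul_pow, hx0', sq_abs]
    have hpd_x0 : 1 / (2 * N) ≤ pd x0 := by
      have h1 := (abs_le.mp (hδd_le x0)).1
      have h2 : δd ≤ 1 / (4 * N ^ 2) := hδd_small
      have h3 : 1 / N - 1 / (4 * N ^ 2) - 1 / (2 * N) = (2 * N - 1) / (4 * N ^ 2) := by
        field_simp
        ring
      have h4 : (0:ℝ) ≤ (2 * N - 1) / (4 * N ^ 2) :=
        div_nonneg (by linarith) (by positivity)
      linarith
    have hδp_sq : 4 * N ^ 2 * δd ≤ δp ^ 2 := by
      have hm := mul_self_le_mul_self (by positivity : (0:ℝ) ≤ 2 * N * Real.sqrt δd) hsqrt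
      have hs := Real.mul_self_sqrt hδd0
      nlinarith [hm, hs]
    -- put it together
    have quad_ge : N ^ 2 * δd ≤ pd x0 * (N * p x0 - 1) ^ 2 / (2 * N) := by
      rw [sq_eq]
      rw [le_div_iff₀ (by positivity)]
      calc N ^ 2 * δd * (2 * N) = (1 / (2 * N)) * (N ^ 2 * (4 * N ^ 2 * δd)) := by
            field_simp; ring
        _ ≤ pd x0 * (N ^ 2 * δp ^ 2) := by
            apply mul_le_mul hpd_x0 _ (by positivity) (le_trans (by positivity) hpd_x0)
            exact mul_le_mul_of_nonneg_left hδp_sq (by positivity)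
    calc ∑ x, pd x * Real.log (N * p x)
        ≤ ∑ x, pd x * (N * p x - 1) - pd x0 * (N * p x0 - 1) ^ 2 / (2 * N) := step1
      _ ≤ (N * (1 / N + 2 * δd) - 1) - N ^ 2 * δd := by
          rw [sum_lin]
          have h1 : N * (∑ x, pd x * p x) ≤ N * (1 / N + 2 * δd) :=
            mul_le_mul_of_nonneg_left sum_pp hN0.le
          linarith [quad_ge]
      _ = 2 * N * δd - N ^ 2 * δd := by field_simp; ring
      _ ≤ 0 := by
          have hfin : 0 ≤ N * δd * (N - 2) :=
            mul_nonneg (mul_nonneg hN0.le hδd0) (by linarith)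
          nlinarith [hfin]
  -- convert from logb to log
  have hlog2 : (0:ℝ) < Real.log 2 := Real.log_pos (by norm_num)
  have expand : ∑ x, pd x * Real.log (N * p x)
      = Real.log N + ∑ x, pd x * Real.log (pd x) - ∑ x, pd x * Real.log (pd x / p x) := by
    have h1 : ∀ x, pd x * Real.log (N * p x)
        = pd x * Real.log N + pd x * Real.log (pd x) - pd x * Real.log (pd x / p x) := by
      intro x
      rw [Real.log_mul hN0.ne' (hp_pos x).ne', Real.log_div (hpd_pos x).ne' (hp_pos x).ne']
      ring
    rw [Finset.sum_congr rfl (fun x _ => h1 x), Finset.sum_sub_distrib,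
      Finset.sum_add_distrib, ← Finset.sum_mul, hpdsum, one_mul]
  have goal_eq : Real.logb 2 N - (-∑ x, pd x * Real.logb 2 (pd x))
      - ∑ x, pd x * Real.logb 2 (pd x / p x)
      = (∑ x, pd x * Real.log (N * p x)) / Real.log 2 := by
    simp only [Real.logb, ← mul_div_assoc]
    rw [← Finset.sum_div, ← Finset.sum_div, expand]
    ring
  rw [goal_eq]
  exact div_nonpos_iff.mpr (Or.inr ⟨key, hlog2.le⟩)
end

section
/- Let p be a probability distribution over a finite alphabet X (identified with Z/|X|Z) and for each j let p^{(−j)} denote the cyclic shift of p by j+1 positions. Then max_{j ∈ {0,…,|X|−2}} ‖p^{(−j)} − p‖_∞ = max_x p(x) − min_x p(x), and consequently this maximum is strictly greater than ‖p − p_u‖_∞ whenever p is not the uniform distribution p_u. -/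
open Finset
open Fin.NatCast

/-- **Cyclic shifts and the L∞ distance to uniform.** For a probability distribution `p` on
`X = Z/KZ` (`K ≥ 2`), the maximal sup-norm distance between `p` and its nontrivial cyclic
shifts `p^{(−j)}(i) = p(i + j + 1)` equals `max p − min p`; consequently it is strictly
greater than `‖p − p_u‖_∞` whenever `p` is not uniform. -/
theorem cyclic_shift_Linf {K : ℕ} [NeZero K] (hK : 2 ≤ K)
    (p : Fin K → ℝ) (hp : ∀ x, 0 ≤ p x) (hsum : ∑ x, p x = 1) :
    ((Finset.range (K - 1)).sup'
        (Finset.nonempty_range_iff.mpr (by omega))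
        (fun j => Finset.univ.sup' Finset.univ_nonempty
          (fun i : Fin K => |p (i + ((j + 1 : ℕ) : Fin K)) - p i|))
      = Finset.univ.sup' Finset.univ_nonempty p
          - Finset.univ.inf' Finset.univ_nonempty p) ∧
    (p ≠ (fun _ => 1 / (K : ℝ)) →
      ((Finset.range (K - 1)).sup'
          (Finset.nonempty_range_iff.mpr (by omega))
          (fun j => Finset.univ.sup' Finset.univ_nonempty
            (fun i : Fin K => |p (i + ((j + 1 : ℕ) : Fin K)) - p i|))
        > Finset.univ.sup' Finset.univ_nonempty
            (fun i : Fin K => |p i - 1 / (K : ℝ)|))) := by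
  have hMle : ∀ i, p i ≤ Finset.univ.sup' Finset.univ_nonempty p :=
    fun i => Finset.le_sup' p (mem_univ i)
  have hmle : ∀ i, Finset.univ.inf' Finset.univ_nonempty p ≤ p i :=
    fun i => Finset.inf'_le p (mem_univ i)
  have hmain : ((Finset.range (K - 1)).sup'
        (Finset.nonempty_range_iff.mpr (by omega))
        (fun j => Finset.univ.sup' Finset.univ_nonempty
          (fun i : Fin K => |p (i + ((j + 1 : ℕ) : Fin K)) - p i|))
      = Finset.univ.sup' Finset.univ_nonempty p
          - Finset.univ.inf' Finset.univ_nonempty p) := by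
    apply le_antisymm
    · apply Finset.sup'_le
      intro j _
      apply Finset.sup'_le
      intro i _
      rw [abs_sub_le_iff]
      constructor
      · linarith [hMle (i + ((j + 1 : ℕ) : Fin K)), hmle i]
      · linarith [hmle (i + ((j + 1 : ℕ) : Fin K)), hMle i]
    · obtain ⟨a, _, ha⟩ := Finset.exists_mem_eq_sup' Finset.univ_nonempty p
      obtain ⟨b, _, hb⟩ := Finset.exists_mem_eq_inf' Finset.univ_nonempty p
      by_cases hab : a = b
      · have h0 : Finset.univ.sup' Finset.univ_nonempty p
            - Finset.univ.inf' Finset.univ_nonempty p = 0 := by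
          rw [ha, hb, hab]; ring
        rw [h0]
        refine le_trans ?_ (Finset.le_sup' _ (Finset.mem_range.mpr (show 0 < K - 1 by omega)))
        refine le_trans ?_ (Finset.le_sup' _ (mem_univ (0 : Fin K)))
        exact abs_nonneg _
      · have hdne : a - b ≠ 0 := sub_ne_zero.mpr hab
        have hd1 : 1 ≤ (a - b).val := by
          rcases Nat.eq_zero_or_pos (a - b).val with h | h
          · exact absurd (Fin.ext (h.trans (Fin.val_zero K).symm)) hdne
          · exact h
        have hjmem : (a - b).val - 1 ∈ Finset.range (K - 1) := by
          refine Finset.mem_range.mpr ?_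
          have := (a - b).isLt
          omega
        refine le_trans ?_ (Finset.le_sup' _ hjmem)
        refine le_trans ?_ (Finset.le_sup' _ (mem_univ b))
        have hcast : (((a - b).val - 1 + 1 : ℕ) : Fin K) = a - b := by
          have h1 : (a - b).val - 1 + 1 = (a - b).val := by omega
          rw [h1, Fin.cast_val_eq_self]
        rw [hcast]
        have hba : b + (a - b) = a := by abel
        rw [hba, ha, hb]
        exact le_abs_self _
  refine ⟨hmain, ?_⟩
  intro hne
  rw [hmain]
  have hx : ∃ x, p x ≠ 1 / (K : ℝ) := by
    by_contra h
    push_neg at h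
    exact hne (funext h)
  obtain ⟨x, hx⟩ := hx
  have hKpos : (0 : ℝ) < K := by positivity
  have hsumc : ∑ _i : Fin K, (1 / (K : ℝ)) = 1 := by
    rw [Finset.sum_const, Finset.card_univ, Fintype.card_fin, nsmul_eq_mul]
    field_simp
  have hmlt : Finset.univ.inf' Finset.univ_nonempty p < 1 / (K : ℝ) := by
    by_contra h
    push_neg at h
    have hlt : (1 : ℝ) < 1 := by
      calc (1 : ℝ) = ∑ _i : Fin K, (1 / (K : ℝ)) := hsumc.symm
        _ < ∑ i, p i := Finset.sum_lt_sum (fun i _ => le_trans h (hmle i))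
            ⟨x, mem_univ x, lt_of_le_of_ne (le_trans h (hmle x)) (Ne.symm hx)⟩
        _ = 1 := hsum
    exact lt_irrefl _ hlt
  have hMlt : 1 / (K : ℝ) < Finset.univ.sup' Finset.univ_nonempty p := by
    by_contra h
    push_neg at h
    have hlt : (1 : ℝ) < 1 := by
      calc (1 : ℝ) = ∑ i, p i := hsum.symm
        _ < ∑ _i : Fin K, (1 / (K : ℝ)) := Finset.sum_lt_sum (fun i _ => le_trans (hMle i) h)
            ⟨x, mem_univ x, lt_of_le_of_ne (le_trans (hMle x) h) hx⟩
        _ = 1 := hsumc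
    exact lt_irrefl _ hlt
  refine (Finset.sup'_lt_iff Finset.univ_nonempty).mpr ?_
  intro i _
  rw [abs_sub_lt_iff]
  constructor
  · linarith [hMle i]
  · linarith [hmle i]
end
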